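/- arXiv:1810.06240 — 7 statements merged into one kernel-verified Lean document; each statement's English description precedes it below -/
import Mathlib

section
/- For all integers T, U ≥ 1 and every integer L with max(T, U) ≤ L ≤ T + U − 1, the number of warping paths of order T×U of length exactly L equals binom(L−1, L−T) · binom(T−1, L−U). -/
/-- A single step of a warping path: diagonal, vertical, or horizontal. -/
def WStep (a b : ℕ × ℕ) : Prop :=
  b = (a.1 + 1, a.2 + 1) ∨ b = (a.1, a.2 + 1) ∨ b = (a.1 + 1, a.2)

/-- `l` is the enumeration `p₁, …, p_L` of a warping path of order `T × U`:
it is nonempty, starts at `(1,1)`, ends at `(T,U)`, and consecutive entries differ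
by a warping step. -/
def IsWarpingList (T U : ℕ) (l : List (ℕ × ℕ)) : Prop :=
  l ≠ [] ∧ l.head? = some (1, 1) ∧ l.getLast? = some (T, U) ∧ l.Chain' WStep

/-- `p` (as a set of pairs) is a warping path of order `T × U`. -/
def IsWarpingPath (T U : ℕ) (p : Finset (ℕ × ℕ)) : Prop :=
  ∃ l : List (ℕ × ℕ), IsWarpingList T U l ∧ l.toFinset = p


def stepAdd (p q : ℕ × ℕ) : ℕ × ℕ := (p.1 + q.1, p.2 + q.2)

/-- Step lists of length `n` whose coordinates sum to `(a, b)`. -/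
def SL : ℕ → ℕ → ℕ → Finset (List (ℕ × ℕ))
  | 0, a, b => if a = 0 ∧ b = 0 then {[]} else ∅
  | n+1, a, b =>
      (if 1 ≤ a ∧ 1 ≤ b then (SL n (a-1) (b-1)).image (List.cons (1,1)) else ∅) ∪
      (if 1 ≤ b then (SL n a (b-1)).image (List.cons (0,1)) else ∅) ∪
      (if 1 ≤ a then (SL n (a-1) b).image (List.cons (1,0)) else ∅)

lemma mem_SL : ∀ (n a b : ℕ) (s : List (ℕ × ℕ)),
    s ∈ SL n a b ↔ s.length = n ∧ (∀ x ∈ s, x = (1,1) ∨ x = (0,1) ∨ x = (1,0)) ∧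
      (s.map Prod.fst).sum = a ∧ (s.map Prod.snd).sum = b := by
  intro n
  induction n with
  | zero =>
    intro a b s
    simp only [SL]
    split
    · next h =>
      obtain ⟨rfl, rfl⟩ := h
      constructor
      · intro hs
        simp only [Finset.mem_singleton] at hs
        subst hs
        simp
      · intro ⟨h1, _, _, _⟩
        simp [List.length_eq_zero_iff.mp h1]
    · next h =>
      simp only [Finset.notMem_empty, false_iff]
      rintro ⟨h1, _, h3, h4⟩
      rw [List.length_eq_zero_iff.mp h1] at h3 h4
      simp at h3 h4
      omega
  | succ n ih =>
    intro a b s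
    simp only [SL, Finset.mem_union]
    constructor
    · rintro ((h | h) | h) <;> split_ifs at h with hc <;>
        try exact absurd h (Finset.notMem_empty s)
      all_goals {
        obtain ⟨t, ht, rfl⟩ := Finset.mem_image.mp h
        rw [ih] at ht
        obtain ⟨hl, hmem, hf, hs⟩ := ht
        refine ⟨by simp [hl], ?_, by simp; omega, by simp; omega⟩
        intro x hx
        rcases List.mem_cons.mp hx with rfl | hx
        · simp
        · exact hmem x hx }
    · rintro ⟨hl, hmem, hf, hs⟩
      cases s with
      | nil => simp at hl
      | cons x t =>
        simp only [List.length_cons, Nat.succ.injEq] at hl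
        have hx := hmem x (List.mem_cons_self)
        have hmem' : ∀ y ∈ t, y = (1,1) ∨ y = (0,1) ∨ y = (1,0) :=
          fun y hy => hmem y (List.mem_cons_of_mem x hy)
        simp only [List.map_cons, List.sum_cons] at hf hs
        rcases hx with rfl | rfl | rfl
        · left; left
          simp only at hf hs
          rw [if_pos ⟨by omega, by omega⟩]
          exact Finset.mem_image_of_mem _ ((ih _ _ t).mpr ⟨hl, hmem', by omega, by omega⟩)
        · left; right
          simp only at hf hs
          rw [if_pos (by omega)]
          exact Finset.mem_image_of_mem _ ((ih _ _ t).mpr ⟨hl, hmem', by omega, by omega⟩)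
        · right
          simp only at hf hs
          rw [if_pos (by omega)]
          exact Finset.mem_image_of_mem _ ((ih _ _ t).mpr ⟨hl, hmem', by omega, by omega⟩)

lemma sums_bound : ∀ s : List (ℕ × ℕ), (∀ x ∈ s, x = (1,1) ∨ x = (0,1) ∨ x = (1,0)) →
    (s.map Prod.fst).sum ≤ s.length ∧ (s.map Prod.snd).sum ≤ s.length ∧
      s.length ≤ (s.map Prod.fst).sum + (s.map Prod.snd).sum := by
  intro s
  induction s with
  | nil => simp
  | cons x t ih =>
    intro h
    have hx := h x (List.mem_cons_self)
    have ht := ih fun y hy => h y (List.mem_cons_of_mem x hy)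
    simp only [List.map_cons, List.sum_cons, List.length_cons]
    rcases hx with rfl | rfl | rfl <;> simp <;> omega

lemma SL_eq_empty {n a b : ℕ} (h : ¬(a ≤ n ∧ b ≤ n ∧ n ≤ a + b)) : SL n a b = ∅ := by
  rw [Finset.eq_empty_iff_forall_notMem]
  intro s hs
  rw [mem_SL] at hs
  obtain ⟨hl, hmem, hf, hsnd⟩ := hs
  have := sums_bound s hmem
  omega

lemma card_SL : ∀ n a b : ℕ, a ≤ n → b ≤ n → n ≤ a + b →
    (SL n a b).card = n.choose (n - a) * a.choose (n - b) := by
  intro n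
  induction n with
  | zero =>
    intro a b ha hb _
    interval_cases a
    interval_cases b
    simp [SL]
  | succ n ih =>
    intro a b ha hb hd
    have hconsinj : ∀ x : ℕ × ℕ, Function.Injective (List.cons x) := by
      intro x s t hst; exact (List.cons.injEq x s x t ▸ congrArg id hst).2
    -- disjointness and card of the union
    have hhead : ∀ (P : Prop) [Decidable P] (x : ℕ × ℕ) (F : Finset (List (ℕ × ℕ)))
        (s : List (ℕ × ℕ)), s ∈ (if P then F.image (List.cons x) else ∅) → s.head? = some x := by
      intro P _ x F s hs
      split_ifs at hs
      · obtain ⟨t, _, rfl⟩ := Finset.mem_image.mp hs; rfl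
      · exact absurd hs (Finset.notMem_empty s)
    have hcard : (SL (n+1) a b).card =
        (if 1 ≤ a ∧ 1 ≤ b then (SL n (a-1) (b-1)).card else 0) +
        (if 1 ≤ b then (SL n a (b-1)).card else 0) +
        (if 1 ≤ a then (SL n (a-1) b).card else 0) := by
      conv_lhs => rw [SL]
      rw [Finset.card_union_of_disjoint, Finset.card_union_of_disjoint,
        apply_ite Finset.card, apply_ite Finset.card, apply_ite Finset.card]
      · simp only [Finset.card_empty]
        congr 1 <;> try congr 1
        all_goals first
          | exact Finset.card_image_of_injective _ (hconsinj _)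
          | (split_ifs <;> simp [Finset.card_image_of_injective _ (hconsinj _)])
      · rw [Finset.disjoint_left]
        intro s h1 h2
        have := hhead _ _ _ _ h1
        have := hhead _ _ _ _ h2
        simp_all
      · rw [Finset.disjoint_left]
        intro s h1 h2
        rcases Finset.mem_union.mp h1 with h1 | h1 <;>
          [have := hhead _ _ _ _ h1; have := hhead _ _ _ _ h1] <;>
          have := hhead _ _ _ _ h2 <;> simp_all
    rw [hcard]
    rcases Nat.eq_zero_or_pos a with rfl | ha1
    · -- a = 0, so b = n+1
      have hbv : b = n + 1 := by omega
      subst hbv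
      rw [if_neg (by omega), if_pos (by omega), if_neg (by omega)]
      have : (SL n 0 (n + 1 - 1)).card = n.choose (n - 0) * Nat.choose 0 (n - (n+1-1)) :=
        ih 0 (n+1-1) (by omega) (by omega) (by omega)
      simp only [Nat.add_sub_cancel] at this ⊢
      rw [this]
      simp [Nat.choose_self]
    rcases Nat.eq_zero_or_pos b with rfl | hb1
    · -- b = 0, so a = n+1
      have hav : a = n + 1 := by omega
      subst hav
      rw [if_neg (by omega), if_neg (by omega), if_pos (by omega)]
      have : (SL n (n + 1 - 1) 0).card = n.choose (n - (n+1-1)) * Nat.choose (n+1-1) (n - 0) :=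
        ih (n+1-1) 0 (by omega) (by omega) (by omega)
      simp only [Nat.add_sub_cancel] at this ⊢
      rw [this]
      simp [Nat.choose_self]
    obtain ⟨a', rfl⟩ : ∃ a', a = a' + 1 := ⟨a - 1, by omega⟩
    obtain ⟨b', rfl⟩ : ∃ b', b = b' + 1 := ⟨b - 1, by omega⟩
    rw [if_pos (show 1 ≤ a' + 1 ∧ 1 ≤ b' + 1 by omega), if_pos (show 1 ≤ b' + 1 by omega),
      if_pos (show 1 ≤ a' + 1 by omega)]
    simp only [Nat.add_sub_cancel]
    have ht1 : (SL n a' b').card = n.choose (n - a') * a'.choose (n - b') := by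
      by_cases hc : n ≤ a' + b'
      · exact ih a' b' (by omega) (by omega) hc
      · rw [SL_eq_empty (by omega), Finset.card_empty,
          Nat.choose_eq_zero_of_lt (show a' < n - b' by omega), mul_zero]
    rw [ht1]
    by_cases hA : a' + 1 ≤ n
    · by_cases hB : b' + 1 ≤ n
      · -- main case: all three terms in range
        rw [ih (a'+1) b' hA (by omega) (by omega), ih a' (b'+1) (by omega) hB (by omega)]
        have e1 : n - a' = (n - (a'+1)) + 1 := by omega
        have e2 : n - b' = (n - (b'+1)) + 1 := by omega
        have e3 : n + 1 - (a'+1) = (n - (a'+1)) + 1 := by omega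
        have e4 : n + 1 - (b'+1) = (n - (b'+1)) + 1 := by omega
        rw [e1, e2, e3, e4, Nat.choose_succ_succ (a') (n - (b'+1)),
          Nat.choose_succ_succ n (n - (a'+1))]
        ring
      · -- b' = n
        have hbv : b' = n := by omega
        subst hbv
        rw [SL_eq_empty (show ¬((a':ℕ) ≤ b' ∧ b' + 1 ≤ b' ∧ b' ≤ a' + (b'+1)) by omega),
          Finset.card_empty, ih (a'+1) b' hA (by omega) (by omega)]
        have e1 : b' - b' = 0 := by omega
        have e2 : b' + 1 - (b' + 1) = 0 := by omega
        have e3 : b' + 1 - (a' + 1) = (b' - (a' + 1)) + 1 := by omega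
        have e4 : b' - a' = (b' - (a' + 1)) + 1 := by omega
        rw [e1, e2, e3, e4, Nat.choose_succ_succ b' (b' - (a'+1))]
        simp [Nat.choose_zero_right]
        ring
    · -- a' = n
      have hav : a' = n := by omega
      subst hav
      rw [SL_eq_empty (show ¬((a'+1:ℕ) ≤ a' ∧ b' ≤ a' ∧ a' ≤ (a'+1) + b' ) by omega),
        Finset.card_empty]
      by_cases hB : b' + 1 ≤ a'
      · rw [ih a' (b'+1) (by omega) hB (by omega)]
        have e1 : a' - a' = 0 := by omega
        have e2 : a' + 1 - (a' + 1) = 0 := by omega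
        have e3 : a' + 1 - (b' + 1) = (a' - (b' + 1)) + 1 := by omega
        have e4 : a' - b' = (a' - (b' + 1)) + 1 := by omega
        rw [e1, e2, e3, e4, Nat.choose_succ_succ a' (a' - (b'+1))]
        simp [Nat.choose_zero_right]
        ring
      · -- b' = a' as well: all steps diagonal
        have hbv : b' = a' := by omega
        subst hbv
        rw [SL_eq_empty (show ¬((b':ℕ) ≤ b' ∧ b' + 1 ≤ b' ∧ b' ≤ b' + (b'+1)) by omega),
          Finset.card_empty]
        simp




lemma getLast?_cons_ne_nil {α : Type*} {l : List α} (h : l ≠ []) (a : α) :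
    (a :: l).getLast? = l.getLast? := by
  cases l with
  | nil => exact absurd rfl h
  | cons b t => exact List.getLast?_cons_cons

lemma scanl_head : ∀ (s : List (ℕ × ℕ)) (p : ℕ × ℕ),
    (List.scanl stepAdd p s).head? = some p := by
  intro s p; cases s <;> simp

lemma scanl_ne_nil (s : List (ℕ × ℕ)) (p : ℕ × ℕ) : List.scanl stepAdd p s ≠ [] := by
  cases s <;> simp

lemma scanl_getLast : ∀ (s : List (ℕ × ℕ)) (p : ℕ × ℕ),
    (List.scanl stepAdd p s).getLast? =
      some (p.1 + (s.map Prod.fst).sum, p.2 + (s.map Prod.snd).sum) := by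
  intro s
  induction s with
  | nil => intro p; simp
  | cons x t ih =>
    intro p
    rw [List.scanl_cons, getLast?_cons_ne_nil (scanl_ne_nil t _), ih]
    simp only [List.map_cons, List.sum_cons, stepAdd]
    congr 1
    simp only [Prod.mk.injEq]
    omega

lemma scanl_chain : ∀ (s : List (ℕ × ℕ)) (p : ℕ × ℕ),
    (∀ x ∈ s, x = (1,1) ∨ x = (0,1) ∨ x = (1,0)) →
    (List.scanl stepAdd p s).Chain' WStep := by
  intro s
  induction s with
  | nil => intro p _; exact List.isChain_singleton p
  | cons x t ih =>
    intro p h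
    rw [List.scanl_cons]
    change List.IsChain _ _
    rw [List.isChain_cons]
    refine ⟨?_, ih _ fun y hy => h y (List.mem_cons_of_mem x hy)⟩
    intro q hq
    rw [scanl_head] at hq
    simp only [Option.mem_def, Option.some.injEq] at hq
    subst hq
    rcases h x (List.mem_cons_self) with rfl | rfl | rfl
    · left; rfl
    · right; left; simp [stepAdd]
    · right; right; simp [stepAdd]

lemma exists_steps : ∀ (l : List (ℕ × ℕ)) (p : ℕ × ℕ), l.Chain' WStep →
    l.head? = some p → ∃ s, (∀ x ∈ s, x = (1,1) ∨ x = (0,1) ∨ x = (1,0)) ∧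
      l = List.scanl stepAdd p s := by
  intro l
  induction l with
  | nil => intro p _ h; simp at h
  | cons q t ih =>
    intro p hch hh
    simp only [List.head?_cons, Option.some.injEq] at hh
    subst hh
    rename' q => p
    cases t with
    | nil => exact ⟨[], by simp, by simp⟩
    | cons r t' =>
      change List.IsChain _ _ at hch
      rw [List.isChain_cons_cons] at hch
      obtain ⟨hw, hch'⟩ := hch
      obtain ⟨s', hs', heq⟩ := ih r hch' rfl
      have : ∃ x, (x = ((1,1) : ℕ × ℕ) ∨ x = (0,1) ∨ x = (1,0)) ∧ r = stepAdd p x := by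
        rcases hw with h | h | h
        · exact ⟨(1,1), Or.inl rfl, by simp [stepAdd, h]⟩
        · exact ⟨(0,1), Or.inr (Or.inl rfl), by simp [stepAdd, h]⟩
        · exact ⟨(1,0), Or.inr (Or.inr rfl), by simp [stepAdd, h]⟩
      obtain ⟨x, hx, rfl⟩ := this
      refine ⟨x :: s', ?_, ?_⟩
      · intro y hy
        rcases List.mem_cons.mp hy with rfl | hy
        · exact hx
        · exact hs' y hy
      · rw [List.scanl_cons, ← heq]

lemma scanl_injective : ∀ (s t : List (ℕ × ℕ)) (p : ℕ × ℕ),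
    List.scanl stepAdd p s = List.scanl stepAdd p t → s = t := by
  intro s
  induction s with
  | nil =>
    intro t p h
    cases t with
    | nil => rfl
    | cons y t' =>
      have := congrArg List.length h
      simp [List.length_scanl] at this
  | cons x s' ih =>
    intro t p h
    cases t with
    | nil =>
      have := congrArg List.length h
      simp [List.length_scanl] at this
    | cons y t' =>
      simp only [List.scanl_cons, List.singleton_append, List.cons.injEq] at h
      have hxy : x = y := by
        have := congrArg List.head? h.2
        rw [scanl_head, scanl_head] at this
        simp only [Option.some.injEq, stepAdd, Prod.mk.injEq] at this
        obtain ⟨x1, x2⟩ := x; obtain ⟨y1, y2⟩ := y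
        simp only [Prod.mk.injEq]
        omega
      subst hxy
      rw [ih t' _ h.2]



instance : IsTrans (ℕ × ℕ) (fun u v => u.1 + u.2 < v.1 + v.2) := ⟨fun _ _ _ h1 h2 => by omega⟩
instance : IsAntisymm (ℕ × ℕ) (fun u v => u.1 + u.2 < v.1 + v.2) :=
  ⟨fun _ _ h1 h2 => by omega⟩

lemma chain_pairwise {l : List (ℕ × ℕ)} (h : l.Chain' WStep) :
    l.Pairwise (fun u v => u.1 + u.2 < v.1 + v.2) := by
  rw [← List.isChain_iff_pairwise]
  refine List.IsChain.imp ?_ h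
  rintro a b (h | h | h) <;> subst h <;> simp <;> omega

lemma chain_nodup {l : List (ℕ × ℕ)} (h : l.Chain' WStep) : l.Nodup :=
  (chain_pairwise h).imp fun hlt => by rintro rfl; omega

lemma chain_toFinset_inj {l₁ l₂ : List (ℕ × ℕ)} (h₁ : l₁.Chain' WStep) (h₂ : l₂.Chain' WStep)
    (h : l₁.toFinset = l₂.toFinset) : l₁ = l₂ := by
  have hp : List.Perm l₁ l₂ := by
    have hv := congrArg Finset.val h
    simp only [List.toFinset, Multiset.toFinset, Multiset.coe_dedup,
      List.Nodup.dedup (chain_nodup h₁), List.Nodup.dedup (chain_nodup h₂)] at hv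
    exact Multiset.coe_eq_coe.mp hv
  exact List.Perm.eq_of_pairwise (fun _ _ _ _ ha hb => absurd (lt_trans ha hb) (lt_irrefl _))
    (chain_pairwise h₁) (chain_pairwise h₂) hp


/-- for `max T U ≤ L ≤ T + U - 1`, the number of warping paths of
order `T × U` of length exactly `L` is `(L-1).choose (L-T) * (T-1).choose (L-U)`. -/
theorem warping_path_count (T U : ℕ) (hT : 1 ≤ T) (hU : 1 ≤ U)
    (L : ℕ) (h1 : max T U ≤ L) (h2 : L ≤ T + U - 1) :
    {p : Finset (ℕ × ℕ) | IsWarpingPath T U p ∧ p.card = L}.ncard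
      = Nat.choose (L - 1) (L - T) * Nat.choose (T - 1) (L - U) := by
  have hTL : T ≤ L := le_trans (le_max_left T U) h1
  have hUL : U ≤ L := le_trans (le_max_right T U) h1
  have hL : 1 ≤ L := le_trans hT hTL
  set WLS : Set (List (ℕ × ℕ)) := {l | IsWarpingList T U l ∧ l.length = L} with hWLS
  have hsetA : {p : Finset (ℕ × ℕ) | IsWarpingPath T U p ∧ p.card = L}
      = List.toFinset '' WLS := by
    ext p
    simp only [Set.mem_setOf_eq, Set.mem_image, hWLS]
    constructor
    · rintro ⟨⟨l, hl, rfl⟩, hcard⟩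
      refine ⟨l, ⟨hl, ?_⟩, rfl⟩
      rwa [List.toFinset_card_of_nodup (chain_nodup hl.2.2.2)] at hcard
    · rintro ⟨l, ⟨hl, hlen⟩, rfl⟩
      exact ⟨⟨l, hl, rfl⟩, by
        rw [List.toFinset_card_of_nodup (chain_nodup hl.2.2.2)]; exact hlen⟩
  have hsetB : WLS = (List.scanl stepAdd (1,1)) '' ↑(SL (L-1) (T-1) (U-1)) := by
    ext l
    simp only [hWLS, Set.mem_setOf_eq, Set.mem_image, Finset.mem_coe]
    constructor
    · rintro ⟨⟨hne, hh, hlast, hch⟩, hlen⟩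
      obtain ⟨s, hs, rfl⟩ := exists_steps l (1,1) hch hh
      refine ⟨s, ?_, rfl⟩
      rw [mem_SL]
      rw [List.length_scanl] at hlen
      rw [scanl_getLast] at hlast
      simp only [Option.some.injEq, Prod.mk.injEq] at hlast
      exact ⟨by omega, hs, by omega, by omega⟩
    · rintro ⟨s, hsmem, rfl⟩
      rw [mem_SL] at hsmem
      obtain ⟨hslen, hsel, hf, hsnd⟩ := hsmem
      refine ⟨⟨scanl_ne_nil s _, scanl_head s _, ?_, scanl_chain s _ hsel⟩, ?_⟩
      · rw [scanl_getLast]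
        congr 1
        simp only [Prod.mk.injEq]
        omega
      · rw [List.length_scanl]
        omega
  have hinj1 : Set.InjOn List.toFinset WLS :=
    fun l1 hl1 l2 hl2 h => chain_toFinset_inj hl1.1.2.2.2 hl2.1.2.2.2 h
  have hinj2 : Set.InjOn (List.scanl stepAdd (1,1)) ↑(SL (L-1) (T-1) (U-1)) :=
    fun s _ t _ h => scanl_injective s t _ h
  rw [hsetA, Set.ncard_image_of_injOn hinj1, hsetB, Set.ncard_image_of_injOn hinj2,
    Set.ncard_coe_finset, card_SL (L-1) (T-1) (U-1) (by omega) (by omega) (by omega),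
    show L - 1 - (T - 1) = L - T by omega, show L - 1 - (U - 1) = L - U by omega]
end

section
/- Let G = (V, E_1, …, E_T) and H = (W, F_1, …, F_U) be temporal graphs with |V| ≤ |W|, with vertex signature functions f_{G_i} : V → Q^k (i ∈ [T]) and f_{H_j} : W → Q^k (j ∈ [U]), a metric d on Q^k, and deletion costs Δ_{H_j}(w) ∈ Q. Let p ∈ P_{T,U} be a fixed warping path, let Q be a set of |W| − |V| dummy vertices disjoint from V, and set V' = V ∪ Q. Define σ(u, v) = Σ_{(i,j)∈p} d(f_{G_i}(u), f_{H_j}(v)) for u ∈ V, v ∈ W, and σ(u, v) = Σ_{(i,j)∈p} Δ_{H_j}(v) for u ∈ Q, v ∈ W. Then min_{M ∈ M(V,W)} Σ_{(i,j)∈p} C(G_i, H_j, M) = min over bijections π : V' → W of Σ_{u∈V'} σ(u, π(u)). -/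
/-- `M` is a vertex mapping between the finite vertex sets `V` and `W`:
it consists of `min |V| |W|` pairs, and every vertex of `V` (resp. `W`)
occurs in at most one pair of `M`. -/
def IsVertexMapping {V W : Type*} [Fintype V] [Fintype W]
    (M : Finset (V × W)) : Prop :=
  M.card = min (Fintype.card V) (Fintype.card W) ∧
  (∀ a ∈ M, ∀ b ∈ M, a.1 = b.1 → a = b) ∧
  (∀ a ∈ M, ∀ b ∈ M, a.2 = b.2 → a = b)

/-- for a fixed warping path `p`, the minimum over vertex mappings `M`
of `∑_{(i,j) ∈ p} C(G_i, H_j, M)` equals the minimum, over bijections `π` from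
`V' = V ⊕ Q` (with `Q` a set of `|W| - |V|` dummy vertices) to `W`, of
`∑_{u ∈ V'} σ(u, π u)`, where `σ(u, v) = ∑_{(i,j) ∈ p} d (f_{G_i} u) (f_{H_j} v)`
for `u ∈ V` and `σ(u, v) = ∑_{(i,j) ∈ p} Δ_{H_j} v` for `u ∈ Q`.
(Both minima exist; the statement asserts they coincide.) -/
theorem fixed_warping_path_assignment
    {k : ℕ} {V W : Type*} [Fintype V] [Fintype W] [DecidableEq V] [DecidableEq W]
    (hVW : Fintype.card V ≤ Fintype.card W)
    (T U : ℕ) (hT : 1 ≤ T) (hU : 1 ≤ U)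
    (EG : ℕ → Finset (Sym2 V)) (FH : ℕ → Finset (Sym2 W))
    (f : ℕ → V → (Fin k → ℚ)) (g : ℕ → W → (Fin k → ℚ))
    (d : (Fin k → ℚ) → (Fin k → ℚ) → ℚ)
    (hd0 : ∀ a b, d a b = 0 ↔ a = b)
    (hdsymm : ∀ a b, d a b = d b a)
    (hdtri : ∀ a b c, d a c ≤ d a b + d b c)
    (Δ : ℕ → W → ℚ)
    (p : Finset (ℕ × ℕ)) (hp : IsWarpingPath T U p) :
    ∃ x : ℚ,
      IsLeast {x : ℚ | ∃ M : Finset (V × W), IsVertexMapping M ∧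
        x = ∑ q ∈ p, ((∑ a ∈ M, d (f q.1 a.1) (g q.2 a.2)) +
          ∑ w ∈ Finset.univ \ M.image Prod.snd, Δ q.2 w)} x ∧
      IsLeast {x : ℚ | ∃ π : (V ⊕ Fin (Fintype.card W - Fintype.card V)) ≃ W,
        x = (∑ u : V, ∑ q ∈ p, d (f q.1 u) (g q.2 (π (Sum.inl u)))) +
            ∑ i : Fin (Fintype.card W - Fintype.card V),
              ∑ q ∈ p, Δ q.2 (π (Sum.inr i))} x := by
  classical
  set n := Fintype.card W - Fintype.card V with hn
  set val1 : Finset (V × W) → ℚ := fun M =>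
    ∑ q ∈ p, ((∑ a ∈ M, d (f q.1 a.1) (g q.2 a.2)) +
      ∑ w ∈ Finset.univ \ M.image Prod.snd, Δ q.2 w) with hval1
  set val2 : ((V ⊕ Fin n) ≃ W) → ℚ := fun π =>
    (∑ u : V, ∑ q ∈ p, d (f q.1 u) (g q.2 (π (Sum.inl u)))) +
      ∑ i : Fin n, ∑ q ∈ p, Δ q.2 (π (Sum.inr i)) with hval2
  set Mof : ((V ⊕ Fin n) ≃ W) → Finset (V × W) := fun π =>
    Finset.univ.image (fun v => (v, π (Sum.inl v))) with hMof
  -- Mof π is a vertex mapping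
  have hMofVM : ∀ π, IsVertexMapping (Mof π) := by
    intro π
    have hmem : ∀ a : V × W, a ∈ Mof π ↔ a.2 = π (Sum.inl a.1) := by
      intro a
      simp only [hMof, Finset.mem_image, Finset.mem_univ, true_and]
      constructor
      · rintro ⟨v, rfl⟩; rfl
      · intro h; exact ⟨a.1, by rw [← h]⟩
    refine ⟨?_, ?_, ?_⟩
    · rw [min_eq_left hVW]
      rw [hMof]
      rw [Finset.card_image_of_injective _ (fun x y hxy => congrArg Prod.fst hxy)]
      simp
    · intro a ha b hb h
      rw [hmem] at ha hb
      exact Prod.ext h (by rw [ha, hb, h])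
    · intro a ha b hb h
      rw [hmem] at ha hb
      have : a.1 = b.1 := by
        have := ha.symm.trans (h.trans hb)
        exact Sum.inl_injective (π.injective this)
      exact Prod.ext this h
  -- key computation
  have hval : ∀ π, val1 (Mof π) = val2 π := by
    intro π
    have hinj1 : Function.Injective (fun v : V => (v, π (Sum.inl v))) :=
      fun x y hxy => congrArg Prod.fst hxy
    have hA : ∀ q : ℕ × ℕ, (∑ a ∈ Mof π, d (f q.1 a.1) (g q.2 a.2)) =
        ∑ v : V, d (f q.1 v) (g q.2 (π (Sum.inl v))) := by
      intro q
      rw [hMof]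
      rw [Finset.sum_image (fun x _ y _ h => hinj1 h)]
    have hcompl : Finset.univ \ (Mof π).image Prod.snd =
        Finset.univ.image (fun i : Fin n => π (Sum.inr i)) := by
      ext w
      constructor
      · intro hw
        rw [Finset.mem_sdiff] at hw
        rcases hsw : π.symm w with v | i
        · exfalso
          apply hw.2
          apply Finset.mem_image.2
          refine ⟨(v, π (Sum.inl v)), Finset.mem_image.2 ⟨v, Finset.mem_univ v, rfl⟩, ?_⟩
          show π (Sum.inl v) = w
          rw [← hsw]; simp
        · apply Finset.mem_image.2
          exact ⟨i, Finset.mem_univ i, by rw [← hsw]; simp⟩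
      · intro hw
        rcases Finset.mem_image.1 hw with ⟨i, -, rfl⟩
        rw [Finset.mem_sdiff]
        refine ⟨Finset.mem_univ _, ?_⟩
        intro hmem
        rcases Finset.mem_image.1 hmem with ⟨a, ha, ha2⟩
        rcases Finset.mem_image.1 ha with ⟨v, -, rfl⟩
        exact Sum.inl_ne_inr (π.injective (ha2 : π (Sum.inl v) = π (Sum.inr i)))
    have hB : ∀ q : ℕ × ℕ, (∑ w ∈ Finset.univ \ (Mof π).image Prod.snd, Δ q.2 w) =
        ∑ i : Fin n, Δ q.2 (π (Sum.inr i)) := by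
      intro q
      rw [hcompl, Finset.sum_image]
      intro x _ y _ h
      exact Sum.inr_injective (π.injective h)
    rw [hval1, hval2]
    simp only [hA, hB, Finset.sum_add_distrib]
    rw [Finset.sum_comm (s := p), Finset.sum_comm (s := p)]
  -- every vertex mapping arises as Mof π
  have hsurj : ∀ M : Finset (V × W), IsVertexMapping M → ∃ π, Mof π = M := by
    intro M hM
    have hcardM : M.card = Fintype.card V := by rw [hM.1, min_eq_left hVW]
    have hfst : M.image Prod.fst = Finset.univ := by
      apply Finset.eq_univ_of_card
      rw [Finset.card_image_of_injOn (fun a ha b hb h => hM.2.1 a ha b hb h), hcardM]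
    have hex : ∀ v : V, ∃ w, (v, w) ∈ M := by
      intro v
      have : v ∈ M.image Prod.fst := hfst ▸ Finset.mem_univ v
      rcases Finset.mem_image.1 this with ⟨a, ha, rfl⟩
      exact ⟨a.2, ha⟩
    choose m hm using hex
    have hminj : Function.Injective m := by
      intro x y h
      exact congrArg Prod.fst (hM.2.2 (x, m x) (hm x) (y, m y) (hm y) h)
    have hMeq : M = Finset.univ.image (fun v => (v, m v)) := by
      apply (Finset.eq_of_subset_of_card_le ?_ ?_).symm
      · intro a ha
        rcases Finset.mem_image.1 ha with ⟨v, -, rfl⟩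
        exact hm v
      · rw [Finset.card_image_of_injective _ (fun x y hxy => congrArg Prod.fst hxy)]
        simp [hcardM]
    set S := Finset.univ \ M.image Prod.snd with hS
    have hsnd : (M.image Prod.snd).card = Fintype.card V := by
      rw [Finset.card_image_of_injOn (fun a ha b hb h => hM.2.2 a ha b hb h), hcardM]
    have hScard : n = S.card := by
      rw [hS, Finset.card_sdiff_of_subset (Finset.subset_univ _), Finset.card_univ, hsnd]
    set e : Fin n ≃ {x // x ∈ S} := (finCongr hScard).trans S.equivFin.symm with he
    set F : V ⊕ Fin n → W := Sum.elim m (fun i => (e i : W)) with hF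
    have hFinj : Function.Injective F := by
      have hmS : ∀ v i, m v ≠ (e i : W) := by
        intro v i h
        have hi : (e i : W) ∈ Finset.univ \ M.image Prod.snd := (e i).2
        rw [Finset.mem_sdiff] at hi
        exact hi.2 (Finset.mem_image.2 ⟨(v, m v), hm v, h⟩)
      rintro (x | x) (y | y) h
      · exact congrArg Sum.inl (hminj h)
      · exact absurd h (hmS x y)
      · exact absurd h.symm (hmS y x)
      · exact congrArg Sum.inr (e.injective (Subtype.ext h))
    have hcardVW : Fintype.card (V ⊕ Fin n) = Fintype.card W := by
      simp [hn, Nat.add_sub_cancel' hVW]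
    have hFbij : Function.Bijective F :=
      (Fintype.bijective_iff_injective_and_card F).2 ⟨hFinj, hcardVW⟩
    refine ⟨Equiv.ofBijective F hFbij, ?_⟩
    show Finset.univ.image (fun v => (v, F (Sum.inl v))) = M
    exact hMeq.symm
  -- finishing: the two solution sets are equal, and the second has a least element
  set S1 : Set ℚ := {x : ℚ | ∃ M : Finset (V × W), IsVertexMapping M ∧ x = val1 M} with hS1
  set S2 : Set ℚ := {x : ℚ | ∃ π : (V ⊕ Fin n) ≃ W, x = val2 π} with hS2
  have hSeq : S1 = S2 := by
    ext x
    constructor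
    · rintro ⟨M, hM, rfl⟩
      rcases hsurj M hM with ⟨π, rfl⟩
      exact ⟨π, hval π⟩
    · rintro ⟨π, rfl⟩
      exact ⟨Mof π, hMofVM π, (hval π).symm⟩
  have hne : Nonempty ((V ⊕ Fin n) ≃ W) := by
    have : Fintype.card (V ⊕ Fin n) = Fintype.card W := by
      simp [hn, Nat.add_sub_cancel' hVW]
    exact ⟨Fintype.equivOfCardEq this⟩
  obtain ⟨π₀⟩ := hne
  set Fs : Finset ℚ := Finset.univ.image val2 with hFs
  have hFsne : Fs.Nonempty := ⟨val2 π₀, Finset.mem_image.2 ⟨π₀, Finset.mem_univ _, rfl⟩⟩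
  have hleast : IsLeast S2 (Fs.min' hFsne) := by
    constructor
    · rcases Finset.mem_image.1 (Fs.min'_mem hFsne) with ⟨π, -, hπ⟩
      exact ⟨π, hπ.symm⟩
    · rintro x ⟨π, rfl⟩
      exact Fs.min'_le _ (Finset.mem_image.2 ⟨π, Finset.mem_univ _, rfl⟩)
  exact ⟨Fs.min' hFsne, hSeq ▸ hleast, hleast⟩
end

section
/- Let (X, d) be a metric space and let x = (x_1, …, x_T) ∈ X^T and y = (y_1, …, y_U) ∈ X^U be finite sequences (T, U ≥ 1). Then min_{p ∈ P_{T,U}} Σ_{(i,j)∈p} d(x_i, y_j) = 0 if and only if the condensation of x equals the condensation of y. -/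
open List

section Helpers

lemma head?_destutter' {α : Type*} (R : α → α → Prop) [DecidableRel R] :
    ∀ (l : List α) (a : α), (l.destutter' R a).head? = some a
  | [], a => rfl
  | b :: l, a => by
    rw [destutter'_cons]; split
    · rfl
    · exact head?_destutter' R l a

lemma destutter_ne_cons_congr {α : Type*} [DecidableEq α] (a b : α) {L1 L2 : List α}
    (h : (b :: L1).destutter (· ≠ ·) = (b :: L2).destutter (· ≠ ·)) :
    (a :: b :: L1).destutter (· ≠ ·) = (a :: b :: L2).destutter (· ≠ ·) := by
  rw [destutter_cons_cons, destutter_cons_cons]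
  rw [destutter_cons', destutter_cons'] at h
  by_cases hab : a ≠ b
  · rw [if_pos hab, if_pos hab, h]
  · push_neg at hab; subst hab; simpa using h

lemma le_getLast_of_steps : ∀ (l : List ℕ) (s t : ℕ), l.head? = some s → l.getLast? = some t →
    l.Chain' (fun a b => b = a ∨ b = a + 1) → s ≤ t
  | [a], s, t, hs, ht, _ => by simp at hs ht; omega
  | a :: b :: l, s, t, hs, ht, hc => by
    simp only [head?_cons, Option.some.injEq] at hs
    unfold Chain' at hc; rw [isChain_cons_cons] at hc
    have := le_getLast_of_steps (b :: l) b t (by simp) ht hc.2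
    omega

lemma destutter_map_of_steps {X : Type*} [DecidableEq X] (f : ℕ → X) :
    ∀ (idx : List ℕ) (s t : ℕ), idx.head? = some s → idx.getLast? = some t →
    idx.Chain' (fun a b => b = a ∨ b = a + 1) →
    (idx.map f).destutter (· ≠ ·) = ((List.range' s (t + 1 - s)).map f).destutter (· ≠ ·)
  | [a], s, t, hs, ht, _ => by
    simp at hs ht
    subst hs; subst ht
    simp [Nat.add_sub_cancel_left]
  | a :: b :: idx, s, t, hs, ht, hc => by
    simp only [head?_cons, Option.some.injEq] at hs
    subst hs
    unfold Chain' at hc; rw [isChain_cons_cons] at hc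
    replace ht : (b :: idx).getLast? = some t := ht
    have hbt : b ≤ t := le_getLast_of_steps _ b t (by simp) ht hc.2
    have ih := destutter_map_of_steps f (b :: idx) b t (by simp) ht hc.2
    rcases hc.1 with hb | hb
    · subst hb
      rw [map_cons, map_cons, destutter_cons_cons, if_neg (by simp)]
      rw [← destutter_cons', ← map_cons]
      exact ih
    · subst hb
      have hst : t + 1 - a = (t + 1 - (a + 1)) + 1 := by omega
      rw [hst, range'_succ]
      have hr : List.range' (a+1) (t + 1 - (a+1)) = (a+1) :: List.range' (a+1+1) (t - (a+1)) := by
        have h2 : t + 1 - (a+1) = (t - (a+1)) + 1 := by omega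
        rw [h2, range'_succ]
      rw [hr] at ih ⊢
      simp only [map_cons] at ih ⊢
      exact destutter_ne_cons_congr (f a) (f (a+1)) ih

lemma shift_warp (dx dy : ℕ) (hstep : WStep (1,1) (1+dx, 1+dy)) (T U : ℕ) (l : List (ℕ × ℕ))
    (h : IsWarpingList T U l) :
    IsWarpingList (T+dx) (U+dy) ((1,1) :: l.map (fun q => (q.1+dx, q.2+dy))) := by
  obtain ⟨hne, hhead, hlast, hchain⟩ := h
  refine ⟨by simp, by simp, ?_, ?_⟩
  · obtain ⟨c, l', rfl⟩ := List.exists_cons_of_ne_nil hne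
    rw [map_cons, getLast?_cons_cons]
    show (List.map (fun q => (q.1 + dx, q.2 + dy)) (c :: l')).getLast? = some (T + dx, U + dy)
    rw [getLast?_map, hlast]
    rfl
  · unfold Chain'; rw [isChain_cons]
    constructor
    · intro q hq
      rw [head?_map, hhead] at hq
      simp at hq
      subst hq
      exact hstep
    · rw [isChain_map]
      refine hchain.imp ?_
      rintro ⟨a1, a2⟩ ⟨b1, b2⟩ (h | h | h) <;>
        · simp_all [WStep, Prod.ext_iff]
          omega

lemma exists_zero_path {X : Type*} [DecidableEq X] (d : X) :
    ∀ (n : ℕ) (xs ys : List X), xs.length + ys.length ≤ n → xs ≠ [] → ys ≠ [] →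
    xs.destutter (· ≠ ·) = ys.destutter (· ≠ ·) →
    ∃ l : List (ℕ × ℕ), IsWarpingList xs.length ys.length l ∧
      ∀ q ∈ l, 1 ≤ q.1 ∧ q.1 ≤ xs.length ∧ 1 ≤ q.2 ∧ q.2 ≤ ys.length ∧
        xs.getD (q.1 - 1) d = ys.getD (q.2 - 1) d := by
  intro n
  induction n with
  | zero =>
    rintro (_ | ⟨a, xs'⟩) ys hlen hx hy _
    · exact absurd rfl hx
    · simp at hlen
  | succ n ih =>
    rintro (_ | ⟨a, xs'⟩) ys hlen hx hy hd
    · exact absurd rfl hx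
    rcases ys with _ | ⟨b, ys'⟩
    · exact absurd rfl hy
    have hab : a = b := by
      have h1 := congrArg List.head? hd
      rw [destutter_cons', destutter_cons', head?_destutter', head?_destutter'] at h1
      simpa using h1
    subst hab
    by_cases hxa : xs'.head? = some a
    · -- horizontal step: xs = a :: a :: xs''
      obtain ⟨a₂, xs'', rfl⟩ : ∃ a₂ xs'', xs' = a₂ :: xs'' := by
        cases xs' with
        | nil => simp at hxa
        | cons c t => exact ⟨c, t, rfl⟩
      have ha2 : a₂ = a := by simpa using hxa
      subst ha2
      have hd' : (a₂ :: xs'').destutter (· ≠ ·) = (a₂ :: ys').destutter (· ≠ ·) := by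
        rw [destutter_cons'] at hd ⊢
        rwa [destutter'_cons_neg (R := (· ≠ ·)) xs'' (a := a₂) (b := a₂) (by simp)] at hd
      obtain ⟨l', hw, hq⟩ := ih (a₂ :: xs'') (a₂ :: ys') (by simp at hlen ⊢; omega)
        (cons_ne_nil _ _) (cons_ne_nil _ _) hd'
      refine ⟨(1,1) :: l'.map (fun q => (q.1+1, q.2+0)), ?_, ?_⟩
      · have := shift_warp 1 0 (by right; right; rfl) _ _ l' hw
        simpa using this
      · intro q hq'
        rw [mem_cons] at hq'
        rcases hq' with rfl | hq'
        · exact ⟨le_refl _, by simp, le_refl _, by simp, rfl⟩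
        · simp only [mem_map] at hq'
          obtain ⟨r, hr, rfl⟩ := hq'
          obtain ⟨h1, h2, h3, h4, h5⟩ := hq r hr
          refine ⟨by omega, by simp at h2 ⊢; omega, by omega, by simpa using h4, ?_⟩
          have e1 : r.1 + 1 - 1 = (r.1 - 1) + 1 := by omega
          rw [e1, getD_cons_succ]
          simpa using h5
    · by_cases hyb : ys'.head? = some a
      · -- vertical step: ys = a :: a :: ys''
        obtain ⟨b₂, ys'', rfl⟩ : ∃ b₂ ys'', ys' = b₂ :: ys'' := by
          cases ys' with
          | nil => simp at hyb
          | cons c t => exact ⟨c, t, rfl⟩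
        have hb2 : b₂ = a := by simpa using hyb
        subst hb2
        have hd' : (b₂ :: xs').destutter (· ≠ ·) = (b₂ :: ys'').destutter (· ≠ ·) := by
          rw [destutter_cons', destutter_cons'] at hd ⊢
          rwa [destutter'_cons_neg (R := (· ≠ ·)) ys'' (a := b₂) (b := b₂) (by simp)] at hd
        obtain ⟨l', hw, hq⟩ := ih (b₂ :: xs') (b₂ :: ys'') (by simp at hlen ⊢; omega)
          (cons_ne_nil _ _) (cons_ne_nil _ _) hd'
        refine ⟨(1,1) :: l'.map (fun q => (q.1+0, q.2+1)), ?_, ?_⟩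
        · have := shift_warp 0 1 (by right; left; rfl) _ _ l' hw
          simpa using this
        · intro q hq'
          rw [mem_cons] at hq'
          rcases hq' with rfl | hq'
          · exact ⟨le_refl _, by simp, le_refl _, by simp, rfl⟩
          · simp only [mem_map] at hq'
            obtain ⟨r, hr, rfl⟩ := hq'
            obtain ⟨h1, h2, h3, h4, h5⟩ := hq r hr
            refine ⟨by omega, by simpa using h2, by omega, by simp at h4 ⊢; omega, ?_⟩
            have e1 : r.2 + 1 - 1 = (r.2 - 1) + 1 := by omega
            rw [e1, getD_cons_succ]
            simpa using h5
      · rcases xs' with _ | ⟨a₂, xs''⟩ <;> rcases ys' with _ | ⟨b₂, ys''⟩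
        · -- both singletons
          refine ⟨[(1,1)], ⟨by simp, rfl, rfl, isChain_singleton _⟩, ?_⟩
          intro q hq'
          simp only [mem_singleton] at hq'
          subst hq'
          exact ⟨le_refl _, by simp, le_refl _, by simp, rfl⟩
        · -- xs singleton, ys longer with b₂ ≠ a : contradiction
          exfalso
          have hb2 : a ≠ b₂ := fun h => hyb (by simp [← h])
          rw [destutter_singleton, destutter_cons', destutter'_cons_pos _ hb2] at hd
          injection hd with h1 h2
          exact List.destutter'_ne_nil (· ≠ ·) (l := ys'') (a := b₂) h2.symm
        · -- ys singleton, xs longer with a₂ ≠ a : contradiction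
          exfalso
          have ha2 : a ≠ a₂ := fun h => hxa (by simp [← h])
          rw [destutter_singleton, destutter_cons', destutter'_cons_pos _ ha2] at hd
          injection hd with h1 h2
          exact List.destutter'_ne_nil (· ≠ ·) (l := xs'') (a := a₂) h2
        · -- diagonal step
          have ha2 : a ≠ a₂ := fun h => hxa (by simp [← h])
          have hb2 : a ≠ b₂ := fun h => hyb (by simp [← h])
          have hd' : (a₂ :: xs'').destutter (· ≠ ·) = (b₂ :: ys'').destutter (· ≠ ·) := by
            rw [destutter_cons', destutter'_cons_pos _ ha2, destutter_cons',
              destutter'_cons_pos _ hb2] at hd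
            rw [destutter_cons', destutter_cons']
            injection hd
          obtain ⟨l', hw, hq⟩ := ih (a₂ :: xs'') (b₂ :: ys'') (by simp at hlen ⊢; omega)
            (cons_ne_nil _ _) (cons_ne_nil _ _) hd'
          refine ⟨(1,1) :: l'.map (fun q => (q.1+1, q.2+1)), ?_, ?_⟩
          · have := shift_warp 1 1 (by left; rfl) _ _ l' hw
            simpa using this
          · intro q hq'
            rw [mem_cons] at hq'
            rcases hq' with rfl | hq'
            · exact ⟨le_refl _, by simp, le_refl _, by simp, rfl⟩
            · simp only [mem_map] at hq'
              obtain ⟨r, hr, rfl⟩ := hq'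
              obtain ⟨h1, h2, h3, h4, h5⟩ := hq r hr
              refine ⟨by omega, by simp at h2 ⊢; omega, by omega, by simp at h4 ⊢; omega, ?_⟩
              have e1 : r.1 + 1 - 1 = (r.1 - 1) + 1 := by omega
              have e2 : r.2 + 1 - 1 = (r.2 - 1) + 1 := by omega
              rw [e1, e2, getD_cons_succ, getD_cons_succ]
              exact h5

lemma range'_map_eq {X : Type*} (f : ℕ → X) (T : ℕ) :
    (List.range' 1 T).map f = (List.range T).map (fun i => f (i + 1)) := by
  rw [range'_eq_map_range, map_map]
  exact List.map_congr_left fun i _ => by simp [Nat.add_comm]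

end Helpers

/-- for sequences `x₁, …, x_T` and `y₁, …, y_U` in a metric space, the
dynamic time warping distance `min_{p ∈ P_{T,U}} ∑_{(i,j) ∈ p} dist x_i y_j` is `0`
(expressed as: `0` is the least element of the set of warping costs) if and only if
the condensations of the two sequences coincide.  Condensation is
`List.destutter (· ≠ ·)`, which collapses each maximal run of equal consecutive
entries to a single entry. -/
theorem dtw_zero_iff_condensations_eq {X : Type*} [MetricSpace X] [DecidableEq X]
    (T U : ℕ) (hT : 1 ≤ T) (hU : 1 ≤ U) (x y : ℕ → X) :
    IsLeast {s : ℝ | ∃ p : Finset (ℕ × ℕ), IsWarpingPath T U p ∧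
        s = ∑ q ∈ p, dist (x q.1) (y q.2)} 0 ↔
      ((List.range T).map (fun i => x (i + 1))).destutter (· ≠ ·) =
      ((List.range U).map (fun j => y (j + 1))).destutter (· ≠ ·) := by
  constructor
  · rintro ⟨⟨p, ⟨l, ⟨hne, hhead, hlast, hchain⟩, rfl⟩, hsum⟩, -⟩
    have hzero : ∀ q ∈ l, x q.1 = y q.2 := by
      intro q hq
      have hq' : q ∈ l.toFinset := mem_toFinset.mpr hq
      have := (Finset.sum_eq_zero_iff_of_nonneg
        (fun i _ => dist_nonneg (x := x i.1) (y := y i.2))).mp hsum.symm q hq'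
      exact dist_eq_zero.mp this
    have h1 := destutter_map_of_steps x (l.map Prod.fst) 1 T
      (by rw [head?_map, hhead]; rfl) (by rw [getLast?_map, hlast]; rfl)
      (by unfold Chain'; rw [isChain_map]
          exact hchain.imp (by rintro a b (h | h | h) <;> simp [h]))
    have h2 := destutter_map_of_steps y (l.map Prod.snd) 1 U
      (by rw [head?_map, hhead]; rfl) (by rw [getLast?_map, hlast]; rfl)
      (by unfold Chain'; rw [isChain_map]
          exact hchain.imp (by rintro a b (h | h | h) <;> simp [h]))
    rw [map_map] at h1 h2
    have hmapeq : l.map (x ∘ Prod.fst) = l.map (y ∘ Prod.snd) :=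
      List.map_congr_left fun q hq => hzero q hq
    have hTT : T + 1 - 1 = T := by omega
    have hUU : U + 1 - 1 = U := by omega
    rw [hTT, range'_map_eq x T] at h1
    rw [hUU, range'_map_eq y U] at h2
    rw [← h1, ← h2, hmapeq]
  · intro hcond
    constructor
    · have hx : ((List.range T).map (fun i => x (i + 1))) ≠ [] := by
        simp only [ne_eq, map_eq_nil_iff, range_eq_nil]
        omega
      have hy : ((List.range U).map (fun j => y (j + 1))) ≠ [] := by
        simp only [ne_eq, map_eq_nil_iff, range_eq_nil]
        omega
      obtain ⟨l, hwl, hq⟩ := exists_zero_path (x 1) _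
        ((List.range T).map (fun i => x (i + 1))) ((List.range U).map (fun j => y (j + 1)))
        le_rfl hx hy hcond
      simp only [length_map, length_range] at hwl hq
      refine ⟨l.toFinset, ⟨l, hwl, rfl⟩, ?_⟩
      symm
      apply Finset.sum_eq_zero
      intro q hq'
      obtain ⟨h1, h2, h3, h4, h5⟩ := hq q (mem_toFinset.mp hq')
      have hx1 : ((List.range T).map (fun i => x (i + 1))).getD (q.1 - 1) (x 1) = x q.1 := by
        rw [getD_eq_getElem _ _ (by simp; omega)]
        simp only [getElem_map, getElem_range]
        congr 1
        omega
      have hy1 : ((List.range U).map (fun j => y (j + 1))).getD (q.2 - 1) (x 1) = y q.2 := by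
        rw [getD_eq_getElem _ _ (by simp; omega)]
        simp only [getElem_map, getElem_range]
        congr 1
        omega
      rw [← hx1, ← hy1, h5, dist_self]
    · rintro s ⟨p, hp, rfl⟩
      exact Finset.sum_nonneg fun q _ => dist_nonneg
end

section
/- Let G = (V, E_1, …, E_T) and H = (W, F_1, …, F_U) be temporal graphs with |V| = |W| = n, with vertex signature functions f_{G_i} : V → Q^k (i ∈ [T]) and f_{H_j} : W → Q^k (j ∈ [U]) and a metric d on Q^k. Then dtgw(G, H) = 0 if and only if there exists a bijection M : V → W such that the condensation of the sequence ((f_{G_i}(v))_{v∈V})_{i=1,…,T} equals the condensation of the sequence ((f_{H_j}(M(v)))_{v∈V})_{j=1,…,U}. -/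
section DTGWAux

open List

variable {α : Type*} [DecidableEq α]

private lemma destutter'_ne_head? (a : α) (l : List α) :
    (l.destutter' (· ≠ ·) a).head? = some a := by
  induction l generalizing a with
  | nil => simp
  | cons b t ih =>
    rw [List.destutter'_cons]
    split
    · simp
    · exact ih a

private lemma destutter'_ne_eq (a : α) (l : List α) :
    l.destutter' (· ≠ ·) a =
      if (l.destutter (· ≠ ·)).head? = some a then l.destutter (· ≠ ·)
      else a :: l.destutter (· ≠ ·) := by
  induction l generalizing a with
  | nil => simp
  | cons b t ih =>
    rw [List.destutter_cons']
    by_cases hab : a = b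
    · subst hab
      rw [List.destutter'_cons_neg t (by simp), if_pos (destutter'_ne_head? a t)]
    · rw [List.destutter'_cons_pos t (show a ≠ b from hab),
        if_neg (by rw [destutter'_ne_head?]; simpa using fun h => hab h.symm)]

private lemma destutter_ne_cons_congr_s9 {xs ys : List α} (a : α)
    (h : xs.destutter (· ≠ ·) = ys.destutter (· ≠ ·)) :
    (a :: xs).destutter (· ≠ ·) = (a :: ys).destutter (· ≠ ·) := by
  rw [List.destutter_cons', List.destutter_cons', destutter'_ne_eq, destutter'_ne_eq, h]

/-- Warping equivalence of two nonempty lists. -/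
private inductive WE : List α → List α → Prop
  | base (a : α) : WE [a] [a]
  | diag (a : α) {xs ys : List α} : WE xs ys → WE (a :: xs) (a :: ys)
  | stepV (a : α) {xs ys : List α} : WE (a :: xs) ys → WE (a :: xs) (a :: ys)
  | stepH (a : α) {xs ys : List α} : WE xs (a :: ys) → WE (a :: xs) (a :: ys)

private lemma WE.left_ne_nil {xs ys : List α} (h : WE xs ys) : xs ≠ [] := by
  cases h <;> simp

private lemma WE.right_ne_nil {xs ys : List α} (h : WE xs ys) : ys ≠ [] := by
  cases h <;> simp

private lemma WE.destutter_eq {xs ys : List α} (h : WE xs ys) :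
    xs.destutter (· ≠ ·) = ys.destutter (· ≠ ·) := by
  induction h with
  | base a => rfl
  | diag a _ ih => exact destutter_ne_cons_congr_s9 a ih
  | stepV a _ ih =>
    conv_rhs => rw [List.destutter_cons', destutter'_ne_eq, ← ih]
    rw [if_pos (by rw [List.destutter_cons']; exact destutter'_ne_head? _ _)]
  | stepH a _ ih =>
    conv_lhs => rw [List.destutter_cons', destutter'_ne_eq, ih]
    rw [if_pos (by rw [List.destutter_cons']; exact destutter'_ne_head? _ _)]

private lemma destutter_ne_dup (a : α) (t : List α) :
    (a :: a :: t).destutter (· ≠ ·) = (a :: t).destutter (· ≠ ·) := by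
  rw [List.destutter_cons', List.destutter'_cons_neg t (by simp), List.destutter_cons']

private lemma destutter_ne_cons_of_ne {a c : α} (h : a ≠ c) (t : List α) :
    (a :: c :: t).destutter (· ≠ ·) = a :: (c :: t).destutter (· ≠ ·) := by
  rw [List.destutter_cons', List.destutter'_cons_pos t h, List.destutter_cons']

private lemma we_of_destutter_eq :
    ∀ (n : ℕ) (xs ys : List α), xs.length + ys.length ≤ n → xs ≠ [] → ys ≠ [] →
      xs.destutter (· ≠ ·) = ys.destutter (· ≠ ·) → WE xs ys := by
  intro n
  induction n with
  | zero =>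
    intro xs ys hn hx _ _
    cases xs <;> simp at hn hx
  | succ n ih =>
    rintro (_ | ⟨a, xs'⟩) (_ | ⟨b, ys'⟩) hn hx hy h
    · exact absurd rfl hx
    · exact absurd rfl hx
    · exact absurd rfl hy
    have hab : a = b := by
      have := congrArg List.head? h
      rw [List.destutter_cons', List.destutter_cons', destutter'_ne_head?,
        destutter'_ne_head?] at this
      exact Option.some.inj this
    subst hab
    match xs', ys' with
    | [], [] => exact WE.base a
    | [], c :: yt =>
      by_cases hca : a = c
      · subst hca
        refine WE.stepV a (ih [a] (a :: yt) (by simp at hn ⊢; omega) (by simp) (by simp) ?_)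
        conv_rhs => rw [← destutter_ne_dup]
        exact h
      · exfalso
        rw [destutter_ne_cons_of_ne hca, List.destutter_singleton] at h
        injection h with h1 h2
        simp [List.destutter_eq_nil] at h2
    | c :: xt, [] =>
      by_cases hca : a = c
      · subst hca
        refine WE.stepH a (ih (a :: xt) [a] (by simp at hn ⊢; omega) (by simp) (by simp) ?_)
        conv_lhs => rw [← destutter_ne_dup]
        exact h
      · exfalso
        rw [destutter_ne_cons_of_ne hca, List.destutter_singleton] at h
        injection h with h1 h2
        simp [List.destutter_eq_nil] at h2
    | c :: xt, e :: yt =>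
      by_cases hca : a = c
      · subst hca
        refine WE.stepH a (ih (a :: xt) (a :: e :: yt) (by simp at hn ⊢; omega)
          (by simp) (by simp) ?_)
        conv_lhs => rw [← destutter_ne_dup]
        exact h
      · by_cases hea : a = e
        · subst hea
          refine WE.stepV a (ih (a :: c :: xt) (a :: yt) (by simp at hn ⊢; omega)
            (by simp) (by simp) ?_)
          conv_rhs => rw [← destutter_ne_dup]
          exact h
        · refine WE.diag a (ih (c :: xt) (e :: yt) (by simp at hn ⊢; omega)
            (by simp) (by simp) ?_)
          rw [destutter_ne_cons_of_ne hca, destutter_ne_cons_of_ne hea] at h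
          exact List.tail_eq_of_cons_eq h


private inductive WQ (C : ℕ → ℕ → Prop) (T U : ℕ) : ℕ → ℕ → Prop
  | base : C T U → WQ C T U T U
  | diag {i j : ℕ} : C i j → WQ C T U (i + 1) (j + 1) → WQ C T U i j
  | right {i j : ℕ} : C i j → WQ C T U i (j + 1) → WQ C T U i j
  | up {i j : ℕ} : C i j → WQ C T U (i + 1) j → WQ C T U i j

private lemma WQ.le {C : ℕ → ℕ → Prop} {T U i j : ℕ} (h : WQ C T U i j) :
    i ≤ T ∧ j ≤ U := by
  induction h with
  | base _ => omega
  | diag _ _ ih => omega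
  | right _ _ ih => omega
  | up _ _ ih => omega

private lemma we_of_wq {A B : ℕ → α} {T U i j : ℕ}
    (h : WQ (fun i j => A i = B j) T U i j) :
    ∀ t u : ℕ, T = i + t → U = j + u →
      WE ((List.range' i (t + 1)).map A) ((List.range' j (u + 1)).map B) := by
  induction h with
  | base hc =>
    intro t u ht hu
    obtain rfl : t = 0 := by omega
    obtain rfl : u = 0 := by omega
    show WE [A T] [B U]
    rw [hc]
    exact WE.base _
  | @diag i j hc hw ih =>
    intro t u ht hu
    have hb := hw.le
    obtain ⟨t', rfl⟩ : ∃ t', t = t' + 1 := ⟨t - 1, by omega⟩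
    obtain ⟨u', rfl⟩ : ∃ u', u = u' + 1 := ⟨u - 1, by omega⟩
    have hrec := ih t' u' (by omega) (by omega)
    rw [show List.range' i (t' + 1 + 1) = i :: List.range' (i + 1) (t' + 1) from rfl,
      show List.range' j (u' + 1 + 1) = j :: List.range' (j + 1) (u' + 1) from rfl,
      List.map_cons, List.map_cons, ← hc]
    exact WE.diag _ hrec
  | @right i j hc hw ih =>
    intro t u ht hu
    have hb := hw.le
    obtain ⟨u', rfl⟩ : ∃ u', u = u' + 1 := ⟨u - 1, by omega⟩
    have hrec := ih t u' (by omega) (by omega)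
    rw [show List.range' i (t + 1) = i :: List.range' (i + 1) t from rfl,
      List.map_cons] at hrec ⊢
    rw [show List.range' j (u' + 1 + 1) = j :: List.range' (j + 1) (u' + 1) from rfl,
      List.map_cons, ← hc]
    exact WE.stepV _ hrec
  | @up i j hc hw ih =>
    intro t u ht hu
    have hb := hw.le
    obtain ⟨t', rfl⟩ : ∃ t', t = t' + 1 := ⟨t - 1, by omega⟩
    have hrec := ih t' u (by omega) (by omega)
    rw [show List.range' j (u + 1) = j :: List.range' (j + 1) u from rfl,
      List.map_cons, ← hc] at hrec ⊢
    rw [show List.range' i (t' + 1 + 1) = i :: List.range' (i + 1) (t' + 1) from rfl,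
      List.map_cons]
    exact WE.stepH _ hrec

private lemma wq_of_we {A B : ℕ → α} :
    ∀ (n t u i j T U : ℕ), t + u ≤ n → T = i + t → U = j + u →
      WE ((List.range' i (t + 1)).map A) ((List.range' j (u + 1)).map B) →
      WQ (fun i j => A i = B j) T U i j := by
  intro n
  induction n with
  | zero =>
    intro t u i j T U hn hT hU hwe
    obtain rfl : t = 0 := by omega
    obtain rfl : u = 0 := by omega
    have hwe : WE [A i] [B j] := hwe
    generalize hA : A i = x at hwe
    generalize hB : B j = y at hwe
    cases hwe with
    | base =>
      obtain rfl : T = i := by omega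
      obtain rfl : U = j := by omega
      exact WQ.base (hA.trans hB.symm)
    | diag a hsub => exact absurd rfl hsub.left_ne_nil
    | stepV a hsub => exact absurd rfl hsub.right_ne_nil
    | stepH a hsub => exact absurd rfl hsub.left_ne_nil
  | succ n ih =>
    intro t u i j T U hn hT hU hwe
    rw [show List.range' i (t + 1) = i :: List.range' (i + 1) t from rfl,
      show List.range' j (u + 1) = j :: List.range' (j + 1) u from rfl,
      List.map_cons, List.map_cons] at hwe
    generalize hX : (List.range' (i + 1) t).map A = X at hwe
    generalize hY : (List.range' (j + 1) u).map B = Y at hwe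
    generalize hA : A i = x at hwe
    generalize hB : B j = y at hwe
    have hXlen : X.length = t := by rw [← hX]; simp
    have hYlen : Y.length = u := by rw [← hY]; simp
    cases hwe with
    | base =>
      obtain rfl : t = 0 := by simpa using hXlen.symm
      obtain rfl : u = 0 := by simpa using hYlen.symm
      obtain rfl : T = i := by omega
      obtain rfl : U = j := by omega
      exact WQ.base (hA.trans hB.symm)
    | diag a hsub =>
      have ht1 : 1 ≤ t := by
        have := List.length_pos_iff.mpr hsub.left_ne_nil; omega
      have hu1 : 1 ≤ u := by
        have := List.length_pos_iff.mpr hsub.right_ne_nil; omega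
      refine WQ.diag (hA.trans hB.symm) (ih (t - 1) (u - 1) (i + 1) (j + 1) T U
        (by omega) (by omega) (by omega) ?_)
      rw [show t - 1 + 1 = t by omega, show u - 1 + 1 = u by omega, hX, hY]
      exact hsub
    | stepV a hsub =>
      have hu1 : 1 ≤ u := by
        have := List.length_pos_iff.mpr hsub.right_ne_nil; omega
      refine WQ.right (hA.trans hB.symm) (ih t (u - 1) i (j + 1) T U
        (by omega) (by omega) (by omega) ?_)
      rw [show List.range' i (t + 1) = i :: List.range' (i + 1) t from rfl,
        List.map_cons, hX, hA, show u - 1 + 1 = u by omega, hY]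
      exact hsub
    | stepH a hsub =>
      have ht1 : 1 ≤ t := by
        have := List.length_pos_iff.mpr hsub.left_ne_nil; omega
      refine WQ.up (hA.trans hB.symm) (ih (t - 1) u (i + 1) j T U
        (by omega) (by omega) (by omega) ?_)
      rw [show t - 1 + 1 = t by omega, hX,
        show List.range' j (u + 1) = j :: List.range' (j + 1) u from rfl,
        List.map_cons, hB, hY]
      exact hsub

private lemma wq_of_list {C : ℕ → ℕ → Prop} {T U : ℕ} :
    ∀ l : List (ℕ × ℕ), ∀ i j : ℕ, l.head? = some (i, j) → l.getLast? = some (T, U) →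
      l.Chain' WStep → (∀ q ∈ l, C q.1 q.2) → WQ C T U i j := by
  intro l
  induction l with
  | nil => simp
  | cons q l ih =>
    intro i j hhead hlast hchain hmem
    have hq : q = (i, j) := by simpa using hhead
    subst hq
    rcases l with _ | ⟨q', l'⟩
    · have hq2 : i = T ∧ j = U := by simpa [Prod.ext_iff] using hlast
      obtain ⟨rfl, rfl⟩ := hq2
      exact WQ.base (by simpa using hmem (i, j) (List.mem_singleton_self _))
    · have hchain' := List.isChain_cons_cons.mp hchain
      have hrec := ih q'.1 q'.2 (by simp) (by simpa using hlast) hchain'.2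
        (fun q hq => hmem q (List.mem_cons_of_mem _ hq))
      have hcij : C i j := by simpa using hmem (i, j) (List.mem_cons_self ..)
      rcases hchain'.1 with hs | hs | hs <;> rw [hs] at hrec
      · exact WQ.diag hcij hrec
      · exact WQ.right hcij hrec
      · exact WQ.up hcij hrec

private lemma list_of_wq {C : ℕ → ℕ → Prop} {T U i j : ℕ} (h : WQ C T U i j) :
    ∃ l : List (ℕ × ℕ), l ≠ [] ∧ l.head? = some (i, j) ∧ l.getLast? = some (T, U) ∧
      l.Chain' WStep ∧ ∀ q ∈ l, C q.1 q.2 := by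
  induction h with
  | base hc => exact ⟨[(T, U)], by simp, by simp, by simp, List.isChain_singleton _, by simpa⟩
  | @diag i j hc _ ih =>
    obtain ⟨l, hne, hh, hl, hch, hm⟩ := ih
    refine ⟨(i, j) :: l, by simp, by simp, ?_, ?_, ?_⟩
    · obtain ⟨x, l2, rfl⟩ := List.exists_cons_of_ne_nil hne
      simpa using hl
    · show List.IsChain _ _; rw [List.isChain_cons]
      refine ⟨fun y hy => ?_, hch⟩
      simp only [hh, Option.mem_some_iff] at hy
      subst hy
      exact Or.inl rfl
    · intro q hq
      rcases List.mem_cons.mp hq with rfl | hq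
      exacts [hc, hm q hq]
  | @right i j hc _ ih =>
    obtain ⟨l, hne, hh, hl, hch, hm⟩ := ih
    refine ⟨(i, j) :: l, by simp, by simp, ?_, ?_, ?_⟩
    · obtain ⟨x, l2, rfl⟩ := List.exists_cons_of_ne_nil hne
      simpa using hl
    · show List.IsChain _ _; rw [List.isChain_cons]
      refine ⟨fun y hy => ?_, hch⟩
      simp only [hh, Option.mem_some_iff] at hy
      subst hy
      exact Or.inr (Or.inl rfl)
    · intro q hq
      rcases List.mem_cons.mp hq with rfl | hq
      exacts [hc, hm q hq]
  | @up i j hc _ ih =>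
    obtain ⟨l, hne, hh, hl, hch, hm⟩ := ih
    refine ⟨(i, j) :: l, by simp, by simp, ?_, ?_, ?_⟩
    · obtain ⟨x, l2, rfl⟩ := List.exists_cons_of_ne_nil hne
      simpa using hl
    · show List.IsChain _ _; rw [List.isChain_cons]
      refine ⟨fun y hy => ?_, hch⟩
      simp only [hh, Option.mem_some_iff] at hy
      subst hy
      exact Or.inr (Or.inr rfl)
    · intro q hq
      rcases List.mem_cons.mp hq with rfl | hq
      exacts [hc, hm q hq]

end DTGWAux

/-- for temporal graphs with `|V| = |W| = n` (so that every vertex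
mapping is a bijection and no deletion costs occur), `dtgw(𝒢, ℋ) = 0` (expressed
as: `0` is the least element of the set of costs realized by pairs of a bijection
and a warping path) if and only if there is a bijection `M : V ≃ W` such that the
condensation of the sequence of layer signatures `(f_{G_i}(v))_{v ∈ V}`, `i = 1…T`,
equals the condensation of the sequence `(f_{H_j}(M v))_{v ∈ V}`, `j = 1…U`. -/
theorem dtgw_zero_iff_condensations_eq
    {k : ℕ} {V W : Type*} [Fintype V] [Fintype W] [DecidableEq V] [DecidableEq W]
    (n : ℕ) (hV : Fintype.card V = n) (hW : Fintype.card W = n)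
    (T U : ℕ) (hT : 1 ≤ T) (hU : 1 ≤ U)
    (EG : ℕ → Finset (Sym2 V)) (FH : ℕ → Finset (Sym2 W))
    (f : ℕ → V → (Fin k → ℚ)) (g : ℕ → W → (Fin k → ℚ))
    (d : (Fin k → ℚ) → (Fin k → ℚ) → ℚ)
    (hd0 : ∀ a b, d a b = 0 ↔ a = b)
    (hdsymm : ∀ a b, d a b = d b a)
    (hdtri : ∀ a b c, d a c ≤ d a b + d b c) :
    IsLeast {s : ℚ | ∃ (M : V ≃ W) (p : Finset (ℕ × ℕ)), IsWarpingPath T U p ∧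
        s = ∑ q ∈ p, ∑ v : V, d (f q.1 v) (g q.2 (M v))} 0 ↔
      ∃ M : V ≃ W,
        ((List.range T).map (fun i => (fun v : V => f (i + 1) v))).destutter (· ≠ ·) =
        ((List.range U).map (fun j => (fun v : V => g (j + 1) (M v)))).destutter (· ≠ ·) := by
  classical
  have hdnn : ∀ a b, 0 ≤ d a b := by
    intro a b
    have h1 := hdtri a b a
    rw [(hd0 a a).mpr rfl, hdsymm b a] at h1
    linarith
  have hrangeT : (List.range T).map (fun i => (fun v : V => f (i + 1) v)) =
      (List.range' 1 T).map f := by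
    rw [List.range'_eq_map_range, List.map_map]
    exact List.map_congr_left fun i _ => by simp [Nat.add_comm]
  constructor
  · rintro ⟨h0, -⟩
    obtain ⟨M, p, hp, hsum⟩ := h0
    obtain ⟨l, ⟨hne, hh, hgl, hch⟩, rfl⟩ := hp
    have hrangeU : (List.range U).map (fun j => (fun v : V => g (j + 1) (M v))) =
        (List.range' 1 U).map (fun j => (fun v : V => g j (M v))) := by
      rw [List.range'_eq_map_range, List.map_map]
      exact List.map_congr_left fun i _ => by simp [Nat.add_comm]
    have hzero : ∀ q ∈ l, (fun v : V => f q.1 v) = (fun v : V => g q.2 (M v)) := by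
      intro q hq
      funext v
      have h2 := (Finset.sum_eq_zero_iff_of_nonneg
        (fun q _ => Finset.sum_nonneg fun v _ => hdnn _ _)).mp hsum.symm q
        (List.mem_toFinset.mpr hq)
      have h3 := (Finset.sum_eq_zero_iff_of_nonneg (fun v _ => hdnn _ _)).mp h2 v
        (Finset.mem_univ v)
      exact (hd0 _ _).mp h3
    have hwq : WQ (fun i j => f i = (fun j v => g j (M v)) j) T U 1 1 :=
      wq_of_list l 1 1 hh hgl hch (fun q hq => hzero q hq)
    have hwe := we_of_wq hwq (T - 1) (U - 1) (by omega) (by omega)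
    rw [show T - 1 + 1 = T by omega, show U - 1 + 1 = U by omega] at hwe
    refine ⟨M, ?_⟩
    rw [hrangeT, hrangeU]
    exact hwe.destutter_eq
  · rintro ⟨M, hM⟩
    have hrangeU : (List.range U).map (fun j => (fun v : V => g (j + 1) (M v))) =
        (List.range' 1 U).map (fun j => (fun v : V => g j (M v))) := by
      rw [List.range'_eq_map_range, List.map_map]
      exact List.map_congr_left fun i _ => by simp [Nat.add_comm]
    constructor
    · rw [hrangeT, hrangeU] at hM
      have hwe := we_of_destutter_eq (T + U) _ _ (by simp)
        (by simp; omega) (by simp; omega) hM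
      have hwq := wq_of_we (T - 1 + (U - 1)) (T - 1) (U - 1) 1 1 T U le_rfl
        (by omega) (by omega)
        (by rw [show T - 1 + 1 = T by omega, show U - 1 + 1 = U by omega]; exact hwe)
      obtain ⟨l, hne, hh, hgl, hch, hm⟩ := list_of_wq hwq
      refine ⟨M, l.toFinset, ⟨l, ⟨hne, hh, hgl, hch⟩, rfl⟩, ?_⟩
      refine (Finset.sum_eq_zero fun q hq => Finset.sum_eq_zero fun v _ => ?_).symm
      exact (hd0 _ _).mpr (congrFun (hm q (List.mem_toFinset.mp hq)) v)
    · rintro s ⟨M', p, hp, rfl⟩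
      exact Finset.sum_nonneg fun q _ => Finset.sum_nonneg fun v _ => hdnn _ _
end

section
/- Let T, U ≥ 1 be integers, let p be a warping path of order T×U, and define w : [T]×[U] → {0,1} by w_{s,t} = 1 if and only if (s,t) ∈ p. Then w satisfies: w_{1,1} = 1; w_{s,t} ≤ w_{s+1,t+1} + w_{s,t+1} + w_{s+1,t} for all (s,t) ∈ [T−1]×[U−1]; w_{T,t} ≤ w_{T,t+1} for all t ∈ [U−1]; and w_{s,U} ≤ w_{s+1,U} for all s ∈ [T−1]. -/
lemma wstep_le {a b : ℕ × ℕ} (h : WStep a b) : a.1 ≤ b.1 ∧ a.2 ≤ b.2 := by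
  rcases h with h | h | h <;> subst h <;> simp

lemma chain_le : ∀ (l : List (ℕ × ℕ)) (hne : l ≠ []), l.Chain' WStep →
    ∀ a ∈ l, a.1 ≤ (l.getLast hne).1 ∧ a.2 ≤ (l.getLast hne).2 := by
  intro l
  induction l with
  | nil => simp
  | cons x xs ih =>
    intro hne hc a ha
    cases xs with
    | nil => simp at ha; subst ha; simp
    | cons y ys =>
      unfold List.Chain' at hc; rw [List.isChain_cons_cons] at hc
      have hle := wstep_le hc.1
      have hlast : (x :: y :: ys).getLast hne = (y :: ys).getLast (by simp) := by
        simp [List.getLast_cons]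
      rw [hlast]
      rcases List.mem_cons.1 ha with rfl | ha
      · have := ih (by simp) hc.2 y (by simp)
        omega
      · exact ih (by simp) hc.2 a ha

lemma next_mem : ∀ (l : List (ℕ × ℕ)) (hne : l ≠ []), l.Chain' WStep →
    ∀ a ∈ l, a ≠ l.getLast hne → ∃ b ∈ l, WStep a b := by
  intro l
  induction l with
  | nil => simp
  | cons x xs ih =>
    intro hne hc a ha hna
    cases xs with
    | nil => simp at ha hna; exact absurd ha hna
    | cons y ys =>
      unfold List.Chain' at hc; rw [List.isChain_cons_cons] at hc
      have hlast : (x :: y :: ys).getLast hne = (y :: ys).getLast (by simp) := by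
        simp [List.getLast_cons]
      rcases List.mem_cons.1 ha with rfl | ha
      · exact ⟨y, by simp, hc.1⟩
      · obtain ⟨b, hb, hs⟩ := ih (by simp) hc.2 a ha (by rw [hlast] at hna; exact hna)
        exact ⟨b, by simp [hb], hs⟩

/-- the 0/1-indicator `w` of a warping path `p` of order `T × U`
satisfies the constraints of the quadratic-programming formulation. -/
theorem warping_path_indicator_constraints (T U : ℕ) (hT : 1 ≤ T) (hU : 1 ≤ U)
    (p : Finset (ℕ × ℕ)) (hp : IsWarpingPath T U p)
    (w : ℕ → ℕ → ℕ) (hw : ∀ s t, w s t = if (s, t) ∈ p then 1 else 0) :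
    w 1 1 = 1 ∧
    (∀ s t, 1 ≤ s → s ≤ T - 1 → 1 ≤ t → t ≤ U - 1 →
      w s t ≤ w (s + 1) (t + 1) + w s (t + 1) + w (s + 1) t) ∧
    (∀ t, 1 ≤ t → t ≤ U - 1 → w T t ≤ w T (t + 1)) ∧
    (∀ s, 1 ≤ s → s ≤ T - 1 → w s U ≤ w (s + 1) U) := by
  obtain ⟨l, ⟨hne, hhead, hlastq, hchain⟩, rfl⟩ := hp
  have hlast : l.getLast hne = (T, U) := by
    rw [List.getLast?_eq_getLast hne, Option.some_inj] at hlastq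
    exact hlastq
  have key : ∀ a ∈ l, a ≠ (T, U) → ∃ b ∈ l, WStep a b := by
    intro a ha hna
    exact next_mem l hne hchain a ha (by rw [hlast]; exact hna)
  have hbd : ∀ a ∈ l, a.1 ≤ T ∧ a.2 ≤ U := by
    intro a ha
    have := chain_le l hne hchain a ha
    rw [hlast] at this
    exact this
  refine ⟨?_, ?_, ?_, ?_⟩
  · rw [hw]
    have : (1, 1) ∈ l := List.mem_of_mem_head? (by rw [hhead]; simp)
    rw [if_pos (List.mem_toFinset.2 this)]
  · intro s t hs1 hs2 ht1 ht2
    by_cases h : (s, t) ∈ l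
    · have hne' : (s, t) ≠ (T, U) := by
        intro heq
        have := Prod.mk.injEq s t T U ▸ heq
        obtain ⟨_, _⟩ := this
        omega
      obtain ⟨b, hb, hsb⟩ := key (s, t) h hne'
      rcases hsb with rfl | rfl | rfl <;>
        · simp only [hw, List.mem_toFinset]
          simp [hb]
          split <;> split <;> split <;> omega
    · rw [hw]
      simp [List.mem_toFinset, h]
  · intro t ht1 ht2
    by_cases h : (T, t) ∈ l
    · have hne' : (T, t) ≠ (T, U) := by
        intro heq
        have := Prod.mk.injEq T t T U ▸ heq
        simp at this
        omega
      obtain ⟨b, hb, hsb⟩ := key (T, t) h hne'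
      have hb1 := (hbd b hb).1
      rcases hsb with rfl | rfl | rfl
      · simp at hb1
      · simp only [hw, List.mem_toFinset]
        rw [if_pos hb]
        split <;> omega
      · simp at hb1
    · rw [hw]
      simp [List.mem_toFinset, h]
  · intro s hs1 hs2
    by_cases h : (s, U) ∈ l
    · have hne' : (s, U) ≠ (T, U) := by
        intro heq
        have := Prod.mk.injEq s U T U ▸ heq
        simp at this
        omega
      obtain ⟨b, hb, hsb⟩ := key (s, U) h hne'
      have hb2 := (hbd b hb).2
      rcases hsb with rfl | rfl | rfl
      · simp at hb2
      · simp at hb2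
      · simp only [hw, List.mem_toFinset]
        rw [if_pos hb]
        split <;> omega
    · rw [hw]
      simp [List.mem_toFinset, h]
end

section
/- Let T, U ≥ 1 be integers and let w : [T]×[U] → {0,1} satisfy: w_{1,1} = 1; w_{s,t} ≤ w_{s+1,t+1} + w_{s,t+1} + w_{s+1,t} for all (s,t) ∈ [T−1]×[U−1]; w_{T,t} ≤ w_{T,t+1} for all t ∈ [U−1]; and w_{s,U} ≤ w_{s+1,U} for all s ∈ [T−1]. Then there exists a warping path p of order T×U with p ⊆ {(s,t) ∈ [T]×[U] : w_{s,t} = 1}. -/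
/-- any 0/1-valued `w` on `[T] × [U]` satisfying the constraints of
the quadratic-programming formulation contains (the indicator of) a warping path
of order `T × U`. -/
theorem warping_path_from_constraints (T U : ℕ) (hT : 1 ≤ T) (hU : 1 ≤ U)
    (w : ℕ → ℕ → ℕ)
    (hw01 : ∀ s t, w s t = 0 ∨ w s t = 1)
    (h11 : w 1 1 = 1)
    (hstep : ∀ s t, 1 ≤ s → s ≤ T - 1 → 1 ≤ t → t ≤ U - 1 →
      w s t ≤ w (s + 1) (t + 1) + w s (t + 1) + w (s + 1) t)
    (hlastrow : ∀ t, 1 ≤ t → t ≤ U - 1 → w T t ≤ w T (t + 1))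
    (hlastcol : ∀ s, 1 ≤ s → s ≤ T - 1 → w s U ≤ w (s + 1) U) :
    ∃ p : Finset (ℕ × ℕ), IsWarpingPath T U p ∧ ∀ q ∈ p, w q.1 q.2 = 1 := by
  -- auxiliary: from any (s,t) with w s t = 1 we can reach (T,U)
  suffices h : ∀ n s t, 1 ≤ s → s ≤ T → 1 ≤ t → t ≤ U → (T - s) + (U - t) = n →
      w s t = 1 →
      ∃ l : List (ℕ × ℕ), l ≠ [] ∧ l.head? = some (s, t) ∧
        l.getLast? = some (T, U) ∧ l.Chain' WStep ∧ ∀ q ∈ l, w q.1 q.2 = 1 by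
    obtain ⟨l, hne, hh, hlast, hch, hall⟩ :=
      h ((T - 1) + (U - 1)) 1 1 le_rfl hT le_rfl hU rfl h11
    refine ⟨l.toFinset, ⟨l, ⟨hne, hh, hlast, hch⟩, rfl⟩, ?_⟩
    intro q hq; exact hall q (List.mem_toFinset.mp hq)
  intro n
  induction n using Nat.strong_induction_on with
  | _ n ih =>
    intro s t hs1 hsT ht1 htU hn hw
    -- helper to extend
    have extend : ∀ s' t', WStep (s, t) (s', t') →
        (∃ l : List (ℕ × ℕ), l ≠ [] ∧ l.head? = some (s', t') ∧
          l.getLast? = some (T, U) ∧ l.Chain' WStep ∧ ∀ q ∈ l, w q.1 q.2 = 1) →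
        ∃ l : List (ℕ × ℕ), l ≠ [] ∧ l.head? = some (s, t) ∧
          l.getLast? = some (T, U) ∧ l.Chain' WStep ∧ ∀ q ∈ l, w q.1 q.2 = 1 := by
      rintro s' t' hst ⟨l, hne, hh, hlast, hch, hall⟩
      obtain ⟨a, l', rfl⟩ := List.exists_cons_of_ne_nil hne
      simp only [List.head?_cons, Option.some.injEq] at hh
      subst hh
      refine ⟨(s, t) :: (s', t') :: l', by simp, by simp, ?_, ?_, ?_⟩
      · rw [List.getLast?_cons_cons]; exact hlast
      · exact List.isChain_cons_cons.mpr ⟨hst, hch⟩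
      · intro q hq
        rcases List.mem_cons.mp hq with h | h
        · subst h; exact hw
        · exact hall q h
    by_cases hsT' : s = T
    · by_cases htU' : t = U
      · exact ⟨[(s, t)], by simp, by simp, by simp [hsT', htU'], List.isChain_singleton _,
          by simpa using hw⟩
      · -- s = T, t < U : move right
        have htU2 : t ≤ U - 1 := by omega
        have hwTt : w T t = 1 := hsT' ▸ hw
        have hwr : w s (t + 1) = 1 := by
          have h2 := hlastrow t ht1 htU2
          rcases hw01 T (t + 1) with h0 | h1
          · omega
          · rw [hsT']; exact h1
        refine extend s (t + 1) (Or.inr (Or.inl rfl)) ?_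
        exact ih ((T - s) + (U - (t + 1))) (by omega) s (t + 1) hs1 hsT
          (by omega) (by omega) rfl hwr
    · by_cases htU' : t = U
      · -- t = U, s < T : move down
        have hsT2 : s ≤ T - 1 := by omega
        have hwsU : w s U = 1 := htU' ▸ hw
        have hwd : w (s + 1) t = 1 := by
          have h2 := hlastcol s hs1 hsT2
          rcases hw01 (s + 1) U with h0 | h1
          · omega
          · rw [htU']; exact h1
        refine extend (s + 1) t (Or.inr (Or.inr rfl)) ?_
        exact ih ((T - (s + 1)) + (U - t)) (by omega) (s + 1) t (by omega)
          (by omega) ht1 htU rfl hwd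
      · -- interior
        have key := hstep s t hs1 (by omega) ht1 (by omega)
        rcases hw01 (s + 1) (t + 1) with hd | hd
        · rcases hw01 s (t + 1) with hr | hr
          · rcases hw01 (s + 1) t with hdn | hdn
            · omega
            · refine extend (s + 1) t (Or.inr (Or.inr rfl)) ?_
              exact ih ((T - (s + 1)) + (U - t)) (by omega) (s + 1) t (by omega)
                (by omega) ht1 htU rfl hdn
          · refine extend s (t + 1) (Or.inr (Or.inl rfl)) ?_
            exact ih ((T - s) + (U - (t + 1))) (by omega) s (t + 1) hs1 hsT
              (by omega) (by omega) rfl hr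
        · refine extend (s + 1) (t + 1) (Or.inl rfl) ?_
          exact ih ((T - (s + 1)) + (U - (t + 1))) (by omega) (s + 1) (t + 1)
            (by omega) (by omega) (by omega) (by omega) rfl hd
end

section
/- Let G = (V, E_1, …, E_T) and H = (W, F_1, …, F_U) be temporal graphs with vertices u_1, …, u_{|V|} and v_1, …, v_{|W|}, vertex signature functions f_{G_s} : V → Q^k and f_{H_t} : W → Q^k, a metric d on Q^k, and nonnegative deletion costs Δ_{G_s}(u), Δ_{H_t}(v) satisfying Δ_{G_s}(u_i) + Δ_{H_t}(v_j) ≥ d(f_{G_s}(u_i), f_{H_t}(v_j)) for all s ∈ [T], t ∈ [U], i ∈ [|V|], j ∈ [|W|]. Define d_{s,t,i,j} = d(f_{G_s}(u_i), f_{H_t}(v_j)) for i ∈ [|V|], j ∈ [|W|]; d_{s,t,i,|W|+1} = Δ_{G_s}(u_i) for i ∈ [|V|]; d_{s,t,|V|+1,j} = Δ_{H_t}(v_j) for j ∈ [|W|]; and d_{s,t,|V|+1,|W|+1} = 0. Then the minimum of Σ_{s∈[T]} Σ_{t∈[U]} Σ_{i∈[|V|+1]} Σ_{j∈[|W|+1]}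 d_{s,t,i,j} · w_{s,t} · m_{i,j} over all binary variables m_{i,j}, w_{s,t} ∈ {0,1} satisfying (a) Σ_{j∈[|W|+1]} m_{i,j} = 1 for all i ∈ [|V|], (b) Σ_{i∈[|V|+1]} m_{i,j} = 1 for all j ∈ [|W|], (c) w_{1,1} = 1, (d) w_{s,t} ≤ w_{s+1,t+1} + w_{s,t+1} + w_{s+1,t} for all (s,t) ∈ [T−1]×[U−1], (e) w_{T,t} ≤ w_{T,t+1} for all t ∈ [U−1], and (f) w_{s,U} ≤ w_{s+1,U} for all s ∈ [T−1], equals dtgw(G, H). -/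
/-- The coefficient `d_{s,t,i,j}` of the quadratic program: the cost of matching
vertex `u_i` in layer `s` to vertex `v_j` in layer `t`, where index `nV` (the
`(|V|+1)`-st index) resp. `nW` plays the role of the artificial "deletion"
vertex. -/
def QPcoeff {k : ℕ} (nV nW : ℕ)
    (f : ℕ → Fin nV → (Fin k → ℚ)) (g : ℕ → Fin nW → (Fin k → ℚ))
    (d : (Fin k → ℚ) → (Fin k → ℚ) → ℚ)
    (ΔG : ℕ → Fin nV → ℚ) (ΔH : ℕ → Fin nW → ℚ)
    (s t : ℕ) (i : Fin (nV + 1)) (j : Fin (nW + 1)) : ℚ :=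
  if hi : (i : ℕ) < nV then
    if hj : (j : ℕ) < nW then d (f s ⟨i, hi⟩) (g t ⟨j, hj⟩)
    else ΔG s ⟨i, hi⟩
  else
    if hj : (j : ℕ) < nW then ΔH t ⟨j, hj⟩
    else 0

lemma chain_mono {l : List (ℕ × ℕ)} (hc : l.Chain' WStep) :
    ∀ (n : ℕ) (hn : n < l.length) (m : ℕ) (hm : m ≤ n),
      (l.get ⟨m, lt_of_le_of_lt hm hn⟩).1 ≤ (l.get ⟨n, hn⟩).1 ∧
      (l.get ⟨m, lt_of_le_of_lt hm hn⟩).2 ≤ (l.get ⟨n, hn⟩).2 := by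
  intro n
  induction n with
  | zero =>
      intro hn m hm
      have : m = 0 := by omega
      subst this; exact ⟨le_rfl, le_rfl⟩
  | succ n ih =>
      intro hn m hm
      rcases Nat.lt_or_ge m (n+1) with h | h
      · have hm' : m ≤ n := by omega
        have h1 := ih (by omega) m hm'
        have h2 := wstep_le (List.isChain_iff_getElem.mp hc n (by omega))
        exact ⟨le_trans h1.1 h2.1, le_trans h1.2 h2.2⟩
      · have : m = n + 1 := by omega
        subst this; exact ⟨le_rfl, le_rfl⟩

lemma head_get {α : Type*} {l : List α} {a : α} (h : l.head? = some a) (hlen : 0 < l.length) :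
    l.get ⟨0, hlen⟩ = a := by
  cases l with
  | nil => simp at h
  | cons b t => simpa using h

lemma last_get {α : Type*} {l : List α} {a : α} (h : l.getLast? = some a)
    (hlen : l.length - 1 < l.length) : l.get ⟨l.length - 1, hlen⟩ = a := by
  have hne : l ≠ [] := by rintro rfl; simp at h
  rw [List.get_eq_getElem, ← List.getLast_eq_getElem hne]
  rw [List.getLast?_eq_getLast hne] at h
  exact (Option.some_injective _ h)

lemma warpingList_bounds {T U : ℕ} {l : List (ℕ × ℕ)} (h : IsWarpingList T U l) :
    ∀ q ∈ l, 1 ≤ q.1 ∧ q.1 ≤ T ∧ 1 ≤ q.2 ∧ q.2 ≤ U := by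
  obtain ⟨hne, hhead, hlast, hc⟩ := h
  intro q hq
  obtain ⟨⟨n, hn⟩, rfl⟩ := List.mem_iff_get.mp hq
  have hlen : 0 < l.length := List.length_pos_iff.mpr hne
  have h1 := chain_mono hc n hn 0 (by omega)
  rw [head_get hhead hlen] at h1
  have h2 := chain_mono hc (l.length - 1) (by omega) n (by omega)
  rw [last_get hlast (by omega)] at h2
  exact ⟨h1.1, h2.1, h1.2, h2.2⟩

lemma warpingList_next {l : List (ℕ × ℕ)} {z q : ℕ × ℕ} (hc : l.Chain' WStep)
    (hlast : l.getLast? = some z) (hq : q ∈ l) (hne : q ≠ z) :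
    ∃ q' ∈ l, WStep q q' := by
  obtain ⟨⟨n, hn⟩, rfl⟩ := List.mem_iff_get.mp hq
  rcases Nat.lt_or_ge n (l.length - 1) with h | h
  · exact ⟨l.get ⟨n+1, by omega⟩, List.get_mem _ _, List.isChain_iff_getElem.mp hc n (by omega)⟩
  · exfalso
    have : n = l.length - 1 := by omega
    subst this
    exact hne (last_get hlast hn)

lemma cons_warp {a : ℕ × ℕ} {l : List (ℕ × ℕ)} {z b : ℕ × ℕ}
    (hne : l ≠ []) (hh : l.head? = some b) (hl : l.getLast? = some z)
    (hc : l.Chain' WStep) (hab : WStep a b) :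
    (a :: l) ≠ [] ∧ (a :: l).head? = some a ∧ (a :: l).getLast? = some z ∧
      (a :: l).Chain' WStep := by
  refine ⟨by simp, by simp, ?_, ?_⟩
  · cases l with
    | nil => exact absurd rfl hne
    | cons c t => rw [List.getLast?_cons_cons]; exact hl
  · show List.IsChain _ _; rw [List.isChain_cons]
    exact ⟨fun y hy => by rw [hh] at hy; cases hy; exact hab, hc⟩

lemma exists_warping_in_support {T U : ℕ} (hT : 1 ≤ T) (hU : 1 ≤ U)
    (w : ℕ → ℕ → ℕ)
    (hwb : ∀ s t, w s t = 0 ∨ w s t = 1)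
    (h11 : w 1 1 = 1)
    (hd : ∀ s t, 1 ≤ s → s ≤ T - 1 → 1 ≤ t → t ≤ U - 1 →
      w s t ≤ w (s + 1) (t + 1) + w s (t + 1) + w (s + 1) t)
    (he : ∀ t, 1 ≤ t → t ≤ U - 1 → w T t ≤ w T (t + 1))
    (hf : ∀ s, 1 ≤ s → s ≤ T - 1 → w s U ≤ w (s + 1) U) :
    ∃ l, IsWarpingList T U l ∧ ∀ q ∈ l, w q.1 q.2 = 1 := by
  suffices key : ∀ n s t, 1 ≤ s → s ≤ T → 1 ≤ t → t ≤ U → (T - s) + (U - t) = n →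
      w s t = 1 →
      ∃ l : List (ℕ × ℕ), l ≠ [] ∧ l.head? = some (s, t) ∧ l.getLast? = some (T, U) ∧
        l.Chain' WStep ∧ ∀ q ∈ l, w q.1 q.2 = 1 by
    obtain ⟨l, h1, h2, h3, h4, h5⟩ := key ((T - 1) + (U - 1)) 1 1 le_rfl hT le_rfl hU rfl h11
    exact ⟨l, ⟨h1, h2, h3, h4⟩, h5⟩
  intro n
  induction n using Nat.strong_induction_on with
  | _ n ih =>
    intro s t hs1 hsT ht1 htU hn hw
    by_cases hend : s = T ∧ t = U
    · exact ⟨[(T, U)], by simp, by simp [hend.1, hend.2], by simp, by exact List.isChain_singleton _,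
        by simp [hend.1, hend.2] at hw ⊢; omega⟩
    · have step : ∃ s' t', WStep (s, t) (s', t') ∧ 1 ≤ s' ∧ s' ≤ T ∧ 1 ≤ t' ∧ t' ≤ U ∧
          w s' t' = 1 ∧ (T - s') + (U - t') < n := by
        rcases Nat.lt_or_ge s T with hsT' | hsT'
        · rcases Nat.lt_or_ge t U with htU' | htU'
          · have hsum := hd s t hs1 (by omega) ht1 (by omega)
            rw [hw] at hsum
            by_cases h1 : w (s+1) (t+1) = 1
            · exact ⟨s+1, t+1, Or.inl rfl, by omega, by omega, by omega, by omega, h1, by omega⟩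
            by_cases h2 : w s (t+1) = 1
            · exact ⟨s, t+1, Or.inr (Or.inl rfl), by omega, by omega, by omega, by omega, h2, by omega⟩
            have h3 : w (s+1) t = 1 := by
              rcases hwb (s+1) (t+1) with ha | ha <;> rcases hwb s (t+1) with hb | hb <;>
                rcases hwb (s+1) t with hc | hc <;> omega
            exact ⟨s+1, t, Or.inr (Or.inr rfl), by omega, by omega, by omega, by omega, h3, by omega⟩
          · have htU2 : t = U := by omega
            subst htU2
            have := hf s hs1 (by omega)
            have h3 : w (s+1) t = 1 := by rcases hwb (s+1) t with hc | hc <;> omega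
            exact ⟨s+1, t, Or.inr (Or.inr rfl), by omega, by omega, ht1, le_rfl, h3, by omega⟩
        · have hsT2 : s = T := by omega
          subst hsT2
          have htU' : t < U := by
            rcases Nat.lt_or_ge t U with h | h
            · exact h
            · exact absurd ⟨rfl, by omega⟩ hend
          have := he t ht1 (by omega)
          have h2 : w s (t+1) = 1 := by rcases hwb s (t+1) with hc | hc <;> omega
          exact ⟨s, t+1, Or.inr (Or.inl rfl), hs1, le_rfl, by omega, by omega, h2, by omega⟩
      obtain ⟨s', t', hstep, hs'1, hs'T, ht'1, ht'U, hw', hlt⟩ := step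
      obtain ⟨l, h1, h2, h3, h4, h5⟩ := ih _ hlt s' t' hs'1 hs'T ht'1 ht'U rfl hw'
      obtain ⟨c1, c2, c3, c4⟩ := cons_warp h1 h2 h3 h4 hstep
      refine ⟨(s, t) :: l, c1, c2, c3, c4, ?_⟩
      intro q hq
      rcases List.mem_cons.mp hq with rfl | hq
      · exact hw
      · exact h5 q hq

lemma binary_sum_le_one {α : Type*} [Fintype α] [DecidableEq α] {m : α → ℕ}
    (h : ∑ a, m a ≤ 1) {a b : α} (ha : m a = 1) (hb : m b = 1) : a = b := by
  by_contra hne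
  have hs : ({a, b} : Finset α).sum m ≤ ∑ x, m x :=
    Finset.sum_le_sum_of_subset (Finset.subset_univ _)
  rw [Finset.sum_pair hne, ha, hb] at hs
  omega

section Aux
variable {k nV nW : ℕ}
variable (f : ℕ → Fin nV → (Fin k → ℚ)) (g : ℕ → Fin nW → (Fin k → ℚ))
variable (d : (Fin k → ℚ) → (Fin k → ℚ) → ℚ)
variable (ΔG : ℕ → Fin nV → ℚ) (ΔH : ℕ → Fin nW → ℚ)

/-- The layer-wise cost of a (partial) mapping. -/
def iCost (s t : ℕ) (M : Finset (Fin nV × Fin nW)) : ℚ :=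
  (∑ a ∈ M, d (f s a.1) (g t a.2)) +
    (∑ v ∈ Finset.univ \ M.image Prod.fst, ΔG s v) +
    (∑ w' ∈ Finset.univ \ M.image Prod.snd, ΔH t w')

lemma iCost_nonneg (hd : ∀ a b, 0 ≤ d a b) (hΔG0 : ∀ s i, 0 ≤ ΔG s i)
    (hΔH0 : ∀ t j, 0 ≤ ΔH t j) (s t : ℕ) (M : Finset (Fin nV × Fin nW)) :
    0 ≤ iCost f g d ΔG ΔH s t M := by
  unfold iCost
  have h1 : (0:ℚ) ≤ ∑ a ∈ M, d (f s a.1) (g t a.2) :=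
    Finset.sum_nonneg fun a _ => hd _ _
  have h2 : (0:ℚ) ≤ ∑ v ∈ Finset.univ \ M.image Prod.fst, ΔG s v :=
    Finset.sum_nonneg fun a _ => hΔG0 _ _
  have h3 : (0:ℚ) ≤ ∑ w' ∈ Finset.univ \ M.image Prod.snd, ΔH t w' :=
    Finset.sum_nonneg fun a _ => hΔH0 _ _
  linarith

lemma extend_mapping (T U : ℕ)
    (hΔd : ∀ s, 1 ≤ s → s ≤ T → ∀ t, 1 ≤ t → t ≤ U → ∀ i j,
      d (f s i) (g t j) ≤ ΔG s i + ΔH t j)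
    (M₀ : Finset (Fin nV × Fin nW))
    (h1 : ∀ a ∈ M₀, ∀ b ∈ M₀, a.1 = b.1 → a = b)
    (h2 : ∀ a ∈ M₀, ∀ b ∈ M₀, a.2 = b.2 → a = b)
    (hcard : M₀.card ≤ min nV nW) :
    ∃ M : Finset (Fin nV × Fin nW), IsVertexMapping M ∧
      ∀ s t, 1 ≤ s → s ≤ T → 1 ≤ t → t ≤ U →
        iCost f g d ΔG ΔH s t M ≤ iCost f g d ΔG ΔH s t M₀ := by
  obtain ⟨n, hn⟩ : ∃ n, min nV nW - M₀.card = n := ⟨_, rfl⟩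
  induction n generalizing M₀ with
  | zero =>
      refine ⟨M₀, ⟨?_, h1, h2⟩, fun s t _ _ _ _ => le_rfl⟩
      simp only [Fintype.card_fin]
      omega
  | succ n ih =>
      have hlt : M₀.card < min nV nW := by omega
      have himg1 : (M₀.image Prod.fst).card = M₀.card :=
        Finset.card_image_of_injOn (fun a ha b hb hab => h1 a ha b hb hab)
      have himg2 : (M₀.image Prod.snd).card = M₀.card :=
        Finset.card_image_of_injOn (fun a ha b hb hab => h2 a ha b hb hab)
      obtain ⟨i, hi⟩ : ∃ i : Fin nV, i ∉ M₀.image Prod.fst := by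
        by_contra h
        push_neg at h
        have : M₀.image Prod.fst = Finset.univ := Finset.eq_univ_iff_forall.mpr h
        rw [this, Finset.card_univ, Fintype.card_fin] at himg1
        omega
      obtain ⟨j, hj⟩ : ∃ j : Fin nW, j ∉ M₀.image Prod.snd := by
        by_contra h
        push_neg at h
        have : M₀.image Prod.snd = Finset.univ := Finset.eq_univ_iff_forall.mpr h
        rw [this, Finset.card_univ, Fintype.card_fin] at himg2
        omega
      have hnotmem : (i, j) ∉ M₀ := fun h =>
        hi (Finset.mem_image.mpr ⟨(i, j), h, rfl⟩)
      set M₁ := insert (i, j) M₀ with hM₁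
      have hcard1 : M₁.card = M₀.card + 1 := Finset.card_insert_of_notMem hnotmem
      have h1' : ∀ a ∈ M₁, ∀ b ∈ M₁, a.1 = b.1 → a = b := by
        intro a ha b hb hab
        rcases Finset.mem_insert.mp ha with rfl | ha <;>
          rcases Finset.mem_insert.mp hb with rfl | hb
        · rfl
        · exact absurd (Finset.mem_image.mpr ⟨b, hb, hab.symm⟩) hi
        · exact absurd (Finset.mem_image.mpr ⟨a, ha, hab⟩) hi
        · exact h1 a ha b hb hab
      have h2' : ∀ a ∈ M₁, ∀ b ∈ M₁, a.2 = b.2 → a = b := by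
        intro a ha b hb hab
        rcases Finset.mem_insert.mp ha with rfl | ha <;>
          rcases Finset.mem_insert.mp hb with rfl | hb
        · rfl
        · exact absurd (Finset.mem_image.mpr ⟨b, hb, hab.symm⟩) hj
        · exact absurd (Finset.mem_image.mpr ⟨a, ha, hab⟩) hj
        · exact h2 a ha b hb hab
      obtain ⟨M, hM, hle⟩ := ih M₁ h1' h2' (by omega) (by omega)
      refine ⟨M, hM, fun s t hs1 hsT ht1 htU => ?_⟩
      refine le_trans (hle s t hs1 hsT ht1 htU) ?_
      have e1 : (∑ a ∈ M₁, d (f s a.1) (g t a.2))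
          = d (f s i) (g t j) + ∑ a ∈ M₀, d (f s a.1) (g t a.2) :=
        Finset.sum_insert hnotmem
      have e2 : (∑ v ∈ Finset.univ \ M₁.image Prod.fst, ΔG s v)
          = (∑ v ∈ Finset.univ \ M₀.image Prod.fst, ΔG s v) - ΔG s i := by
        rw [hM₁, Finset.image_insert, Finset.sdiff_insert]
        have hmem : i ∈ Finset.univ \ M₀.image Prod.fst := by
          simp only [Finset.mem_sdiff, Finset.mem_univ, true_and]; exact hi
        rw [eq_sub_iff_add_eq, Finset.sum_erase_add _ _ hmem]
      have e3 : (∑ w' ∈ Finset.univ \ M₁.image Prod.snd, ΔH t w')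
          = (∑ w' ∈ Finset.univ \ M₀.image Prod.snd, ΔH t w') - ΔH t j := by
        rw [hM₁, Finset.image_insert, Finset.sdiff_insert]
        have hmem : j ∈ Finset.univ \ M₀.image Prod.snd := by
          simp only [Finset.mem_sdiff, Finset.mem_univ, true_and]; exact hj
        rw [eq_sub_iff_add_eq, Finset.sum_erase_add _ _ hmem]
      have hdle := hΔd s hs1 hsT t ht1 htU i j
      unfold iCost
      rw [e1, e2, e3]
      linarith

lemma QPcoeff_cc (s t : ℕ) (i : Fin nV) (j : Fin nW) :
    QPcoeff nV nW f g d ΔG ΔH s t i.castSucc j.castSucc = d (f s i) (g t j) := by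
  simp [QPcoeff, i.isLt, j.isLt]

lemma QPcoeff_cl (s t : ℕ) (i : Fin nV) :
    QPcoeff nV nW f g d ΔG ΔH s t i.castSucc (Fin.last nW) = ΔG s i := by
  simp [QPcoeff, i.isLt]

lemma QPcoeff_lc (s t : ℕ) (j : Fin nW) :
    QPcoeff nV nW f g d ΔG ΔH s t (Fin.last nV) j.castSucc = ΔH t j := by
  simp [QPcoeff, j.isLt]

lemma QPcoeff_ll (s t : ℕ) :
    QPcoeff nV nW f g d ΔG ΔH s t (Fin.last nV) (Fin.last nW) = 0 := by
  simp [QPcoeff]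

/-- the partial matching extracted from the binary variables `m` -/
def qpM (m : Fin (nV + 1) → Fin (nW + 1) → ℕ) : Finset (Fin nV × Fin nW) :=
  Finset.univ.filter (fun a : Fin nV × Fin nW => m a.1.castSucc a.2.castSucc = 1)

variable (m : Fin (nV + 1) → Fin (nW + 1) → ℕ)

lemma row_last_iff (hb : ∀ i j, m i j = 0 ∨ m i j = 1)
    (hrow : ∀ i : Fin nV, ∑ j, m i.castSucc j = 1) (i : Fin nV) :
    m i.castSucc (Fin.last nW) = 1 ↔ i ∉ (qpM m).image Prod.fst := by
  have hr := hrow i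
  rw [Fin.sum_univ_castSucc] at hr
  constructor
  · intro h1 hmem
    obtain ⟨a, ha, rfl⟩ := Finset.mem_image.mp hmem
    have : m a.1.castSucc a.2.castSucc = 1 := (Finset.mem_filter.mp ha).2
    have hle : m a.1.castSucc a.2.castSucc ≤ ∑ j : Fin nW, m a.1.castSucc j.castSucc :=
      Finset.single_le_sum (f := fun j : Fin nW => m a.1.castSucc j.castSucc)
        (fun _ _ => Nat.zero_le _) (Finset.mem_univ a.2)
    omega
  · intro hmem
    by_contra h1
    have h0 : m i.castSucc (Fin.last nW) = 0 := by
      rcases hb i.castSucc (Fin.last nW) with h | h <;> omega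
    rw [h0, Nat.add_zero] at hr
    obtain ⟨j, _, hj⟩ := Finset.exists_ne_zero_of_sum_ne_zero (by omega :
      (∑ j : Fin nW, m i.castSucc j.castSucc) ≠ 0)
    have hj1 : m i.castSucc j.castSucc = 1 := by
      rcases hb i.castSucc j.castSucc with h | h <;> omega
    exact hmem (Finset.mem_image.mpr ⟨(i, j), Finset.mem_filter.mpr ⟨Finset.mem_univ _, hj1⟩, rfl⟩)

lemma col_last_iff (hb : ∀ i j, m i j = 0 ∨ m i j = 1)
    (hcol : ∀ j : Fin nW, ∑ i, m i j.castSucc = 1) (j : Fin nW) :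
    m (Fin.last nV) j.castSucc = 1 ↔ j ∉ (qpM m).image Prod.snd := by
  have hr := hcol j
  rw [Fin.sum_univ_castSucc] at hr
  constructor
  · intro h1 hmem
    obtain ⟨a, ha, rfl⟩ := Finset.mem_image.mp hmem
    have : m a.1.castSucc a.2.castSucc = 1 := (Finset.mem_filter.mp ha).2
    have hle : m a.1.castSucc a.2.castSucc ≤ ∑ i : Fin nV, m i.castSucc a.2.castSucc :=
      Finset.single_le_sum (f := fun i : Fin nV => m i.castSucc a.2.castSucc)
        (fun _ _ => Nat.zero_le _) (Finset.mem_univ a.1)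
    omega
  · intro hmem
    by_contra h1
    have h0 : m (Fin.last nV) j.castSucc = 0 := by
      rcases hb (Fin.last nV) j.castSucc with h | h <;> omega
    rw [h0, Nat.add_zero] at hr
    obtain ⟨i, _, hi⟩ := Finset.exists_ne_zero_of_sum_ne_zero (by omega :
      (∑ i : Fin nV, m i.castSucc j.castSucc) ≠ 0)
    have hi1 : m i.castSucc j.castSucc = 1 := by
      rcases hb i.castSucc j.castSucc with h | h <;> omega
    exact hmem (Finset.mem_image.mpr ⟨(i, j), Finset.mem_filter.mpr ⟨Finset.mem_univ _, hi1⟩, rfl⟩)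

lemma qp_inner_eq (hb : ∀ i j, m i j = 0 ∨ m i j = 1)
    (hrow : ∀ i : Fin nV, ∑ j, m i.castSucc j = 1)
    (hcol : ∀ j : Fin nW, ∑ i, m i j.castSucc = 1) (s t : ℕ) :
    ∑ i : Fin (nV + 1), ∑ j : Fin (nW + 1),
        QPcoeff nV nW f g d ΔG ΔH s t i j * (m i j : ℚ)
      = iCost f g d ΔG ΔH s t (qpM m) := by
  rw [Fin.sum_univ_castSucc (f := fun i => ∑ j : Fin (nW + 1),
    QPcoeff nV nW f g d ΔG ΔH s t i j * (m i j : ℚ))]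
  have e1 : ∀ i : Fin nV, (∑ j : Fin (nW + 1),
      QPcoeff nV nW f g d ΔG ΔH s t i.castSucc j * (m i.castSucc j : ℚ))
      = (∑ j : Fin nW, d (f s i) (g t j) * (m i.castSucc j.castSucc : ℚ))
        + ΔG s i * (m i.castSucc (Fin.last nW) : ℚ) := by
    intro i
    rw [Fin.sum_univ_castSucc (f := fun j =>
      QPcoeff nV nW f g d ΔG ΔH s t i.castSucc j * (m i.castSucc j : ℚ))]
    simp only [QPcoeff_cc, QPcoeff_cl]
  have e2 : (∑ j : Fin (nW + 1),
      QPcoeff nV nW f g d ΔG ΔH s t (Fin.last nV) j * (m (Fin.last nV) j : ℚ))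
      = ∑ j : Fin nW, ΔH t j * (m (Fin.last nV) j.castSucc : ℚ) := by
    rw [Fin.sum_univ_castSucc (f := fun j =>
      QPcoeff nV nW f g d ΔG ΔH s t (Fin.last nV) j * (m (Fin.last nV) j : ℚ))]
    simp only [QPcoeff_lc, QPcoeff_ll, zero_mul, add_zero]
  simp only [e1, e2, Finset.sum_add_distrib]
  have S1 : (∑ i : Fin nV, ∑ j : Fin nW, d (f s i) (g t j) * (m i.castSucc j.castSucc : ℚ))
      = ∑ a ∈ qpM m, d (f s a.1) (g t a.2) := by
    rw [← Fintype.sum_prod_type (f := fun a : Fin nV × Fin nW =>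
      d (f s a.1) (g t a.2) * (m a.1.castSucc a.2.castSucc : ℚ))]
    rw [qpM, Finset.sum_filter]
    apply Finset.sum_congr rfl
    intro a _
    rcases hb a.1.castSucc a.2.castSucc with h | h <;> simp [h]
  have S2 : (∑ i : Fin nV, ΔG s i * (m i.castSucc (Fin.last nW) : ℚ))
      = ∑ v ∈ Finset.univ \ (qpM m).image Prod.fst, ΔG s v := by
    have : (Finset.univ \ (qpM m).image Prod.fst)
        = Finset.univ.filter (fun i : Fin nV => m i.castSucc (Fin.last nW) = 1) := by
      ext i
      simp only [Finset.mem_sdiff, Finset.mem_univ, true_and, Finset.mem_filter]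
      exact (row_last_iff m hb hrow i).symm
    rw [this, Finset.sum_filter]
    apply Finset.sum_congr rfl
    intro i _
    rcases hb i.castSucc (Fin.last nW) with h | h <;> simp [h, mul_comm]
  have S3 : (∑ j : Fin nW, ΔH t j * (m (Fin.last nV) j.castSucc : ℚ))
      = ∑ w' ∈ Finset.univ \ (qpM m).image Prod.snd, ΔH t w' := by
    have : (Finset.univ \ (qpM m).image Prod.snd)
        = Finset.univ.filter (fun j : Fin nW => m (Fin.last nV) j.castSucc = 1) := by
      ext j
      simp only [Finset.mem_sdiff, Finset.mem_univ, true_and, Finset.mem_filter]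
      exact (col_last_iff m hb hcol j).symm
    rw [this, Finset.sum_filter]
    apply Finset.sum_congr rfl
    intro j _
    rcases hb (Fin.last nV) j.castSucc with h | h <;> simp [h, mul_comm]
  rw [S1, S2, S3, iCost]
end Aux


section Aux2
variable {nV nW : ℕ}

/-- binary program variables associated with a vertex mapping -/
def mOf (M : Finset (Fin nV × Fin nW)) : Fin (nV + 1) → Fin (nW + 1) → ℕ :=
  fun i j =>
    if hi : (i : ℕ) < nV then
      if hj : (j : ℕ) < nW then (if (⟨i, hi⟩, ⟨j, hj⟩) ∈ M then 1 else 0)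
      else (if (⟨i, hi⟩ : Fin nV) ∈ M.image Prod.fst then 0 else 1)
    else
      if hj : (j : ℕ) < nW then (if (⟨j, hj⟩ : Fin nW) ∈ M.image Prod.snd then 0 else 1)
      else 0

variable (M : Finset (Fin nV × Fin nW))

lemma mOf_cc (i : Fin nV) (j : Fin nW) :
    mOf M i.castSucc j.castSucc = if (i, j) ∈ M then 1 else 0 := by
  simp [mOf, i.isLt, j.isLt]

lemma mOf_cl (i : Fin nV) :
    mOf M i.castSucc (Fin.last nW) = if i ∈ M.image Prod.fst then 0 else 1 := by
  simp [mOf, i.isLt]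

lemma mOf_lc (j : Fin nW) :
    mOf M (Fin.last nV) j.castSucc = if j ∈ M.image Prod.snd then 0 else 1 := by
  simp [mOf, j.isLt]

lemma mOf_ll : mOf M (Fin.last nV) (Fin.last nW) = 0 := by simp [mOf]

lemma mOf_binary : ∀ i j, mOf M i j = 0 ∨ mOf M i j = 1 := by
  intro i j
  unfold mOf
  split_ifs <;> simp

lemma mOf_row (hM : ∀ a ∈ M, ∀ b ∈ M, a.1 = b.1 → a = b) (i : Fin nV) :
    ∑ j : Fin (nW + 1), mOf M i.castSucc j = 1 := by
  rw [Fin.sum_univ_castSucc]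
  simp only [mOf_cc, mOf_cl]
  have key : (∑ j : Fin nW, if (i, j) ∈ M then 1 else 0)
      = if i ∈ M.image Prod.fst then 1 else 0 := by
    by_cases h : i ∈ M.image Prod.fst
    · obtain ⟨a, haM, ha1⟩ := Finset.mem_image.mp h
      rw [if_pos h]
      rw [Finset.sum_eq_single a.2]
      · rw [if_pos]
        rw [show (i, a.2) = a from Prod.ext ha1.symm rfl]
        exact haM
      · intro b _ hb
        rw [if_neg]
        intro hmem
        exact hb (congrArg Prod.snd (hM _ hmem _ haM ha1.symm))
      · intro h'; exact absurd (Finset.mem_univ _) h'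
    · rw [if_neg h]
      apply Finset.sum_eq_zero
      intro j _
      rw [if_neg]
      intro hmem
      exact h (Finset.mem_image.mpr ⟨(i, j), hmem, rfl⟩)
  rw [key]
  by_cases h : i ∈ M.image Prod.fst <;> simp [h]

lemma mOf_col (hM : ∀ a ∈ M, ∀ b ∈ M, a.2 = b.2 → a = b) (j : Fin nW) :
    ∑ i : Fin (nV + 1), mOf M i j.castSucc = 1 := by
  rw [Fin.sum_univ_castSucc]
  simp only [mOf_cc, mOf_lc]
  have key : (∑ i : Fin nV, if (i, j) ∈ M then 1 else 0)
      = if j ∈ M.image Prod.snd then 1 else 0 := by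
    by_cases h : j ∈ M.image Prod.snd
    · obtain ⟨a, haM, ha1⟩ := Finset.mem_image.mp h
      rw [if_pos h]
      rw [Finset.sum_eq_single a.1]
      · rw [if_pos]
        rw [show (a.1, j) = a from Prod.ext rfl ha1.symm]
        exact haM
      · intro b _ hb
        rw [if_neg]
        intro hmem
        exact hb (congrArg Prod.fst (hM _ hmem _ haM ha1.symm))
      · intro h'; exact absurd (Finset.mem_univ _) h'
    · rw [if_neg h]
      apply Finset.sum_eq_zero
      intro i _
      rw [if_neg]
      intro hmem
      exact h (Finset.mem_image.mpr ⟨(i, j), hmem, rfl⟩)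
  rw [key]
  by_cases h : j ∈ M.image Prod.snd <;> simp [h]

lemma qpM_mOf : qpM (mOf M) = M := by
  ext a
  simp only [qpM, Finset.mem_filter, Finset.mem_univ, true_and, mOf_cc]
  by_cases h : (a.1, a.2) ∈ M <;> simp [h]

lemma qpM_inj_fst (m : Fin (nV + 1) → Fin (nW + 1) → ℕ)
    (hrow : ∀ i : Fin nV, ∑ j, m i.castSucc j = 1) :
    ∀ a ∈ qpM m, ∀ b ∈ qpM m, a.1 = b.1 → a = b := by
  intro a ha b hb hab
  simp only [qpM, Finset.mem_filter] at ha hb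
  rw [← hab] at hb
  have h := hrow a.1
  have h2 : a.2.castSucc = b.2.castSucc :=
    binary_sum_le_one (m := fun j => m a.1.castSucc j) (by simpa using h.le) ha.2 hb.2
  exact Prod.ext hab (Fin.castSucc_injective _ h2)

lemma qpM_inj_snd (m : Fin (nV + 1) → Fin (nW + 1) → ℕ)
    (hcol : ∀ j : Fin nW, ∑ i, m i j.castSucc = 1) :
    ∀ a ∈ qpM m, ∀ b ∈ qpM m, a.2 = b.2 → a = b := by
  intro a ha b hb hab
  simp only [qpM, Finset.mem_filter] at ha hb
  rw [← hab] at hb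
  have h := hcol a.2
  have h2 : a.1.castSucc = b.1.castSucc :=
    binary_sum_le_one (m := fun i => m i a.2.castSucc) (by simpa using h.le) ha.2 hb.2
  exact Prod.ext (Fin.castSucc_injective _ h2) hab

lemma qpM_card_le (m : Fin (nV + 1) → Fin (nW + 1) → ℕ)
    (hrow : ∀ i : Fin nV, ∑ j, m i.castSucc j = 1)
    (hcol : ∀ j : Fin nW, ∑ i, m i j.castSucc = 1) :
    (qpM m).card ≤ min nV nW := by
  have h1 : (qpM m).card = ((qpM m).image Prod.fst).card :=
    (Finset.card_image_of_injOn (fun a ha b hb hab => qpM_inj_fst m hrow a ha b hb hab)).symm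
  have h2 : (qpM m).card = ((qpM m).image Prod.snd).card :=
    (Finset.card_image_of_injOn (fun a ha b hb hab => qpM_inj_snd m hcol a ha b hb hab)).symm
  have h3 : ((qpM m).image Prod.fst).card ≤ nV := by
    simpa using Finset.card_le_card (Finset.subset_univ ((qpM m).image Prod.fst))
  have h4 : ((qpM m).image Prod.snd).card ≤ nW := by
    simpa using Finset.card_le_card (Finset.subset_univ ((qpM m).image Prod.snd))
  omega

lemma sum_indicator_box {T U : ℕ} (F : ℕ → ℕ → ℚ) (p : Finset (ℕ × ℕ))
    (hp : p ⊆ Finset.Icc 1 T ×ˢ Finset.Icc 1 U) :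
    (∑ s ∈ Finset.Icc 1 T, ∑ t ∈ Finset.Icc 1 U,
      (if (s, t) ∈ p then (1:ℚ) else 0) * F s t) = ∑ q ∈ p, F q.1 q.2 := by
  rw [← Finset.sum_product' (f := fun s t => (if (s, t) ∈ p then (1:ℚ) else 0) * F s t)]
  have hcongr : ∀ q ∈ Finset.Icc 1 T ×ˢ Finset.Icc 1 U,
      (if (q.1, q.2) ∈ p then (1:ℚ) else 0) * F q.1 q.2
      = if q ∈ p then F q.1 q.2 else 0 := by
    intro q _
    by_cases h : q ∈ p <;> simp [h]
  rw [Finset.sum_congr rfl hcongr, ← Finset.sum_filter]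
  congr 1
  ext q
  simp only [Finset.mem_filter]
  exact ⟨fun h => h.2, fun h => ⟨hp h, h⟩⟩

lemma sum_box_ge (T U : ℕ) (F : ℕ → ℕ → ℚ) (hF : ∀ s t, 0 ≤ F s t)
    (w : ℕ → ℕ → ℕ) (hwb : ∀ s t, w s t = 0 ∨ w s t = 1)
    (p : Finset (ℕ × ℕ)) (hp : p ⊆ Finset.Icc 1 T ×ˢ Finset.Icc 1 U)
    (hw1 : ∀ q ∈ p, w q.1 q.2 = 1) :
    (∑ q ∈ p, F q.1 q.2) ≤
      ∑ s ∈ Finset.Icc 1 T, ∑ t ∈ Finset.Icc 1 U, (w s t : ℚ) * F s t := by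
  rw [← Finset.sum_product' (f := fun s t => (w s t : ℚ) * F s t)]
  have h1 : (∑ q ∈ p, F q.1 q.2) = ∑ q ∈ p, (w q.1 q.2 : ℚ) * F q.1 q.2 := by
    apply Finset.sum_congr rfl
    intro q hq
    rw [hw1 q hq]
    ring
  rw [h1]
  apply Finset.sum_le_sum_of_subset_of_nonneg hp
  intro q _ _
  rcases hwb q.1 q.2 with h | h <;> rw [h] <;> simp [hF]

end Aux2

/-- the optimal value of the quadratic program equals the
dtgw-distance (both minima exist and coincide). -/
theorem qp_value_eq_dtgw {k : ℕ} (nV nW : ℕ) (T U : ℕ) (hT : 1 ≤ T) (hU : 1 ≤ U)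
    (EG : ℕ → Finset (Sym2 (Fin nV))) (FH : ℕ → Finset (Sym2 (Fin nW)))
    (f : ℕ → Fin nV → (Fin k → ℚ)) (g : ℕ → Fin nW → (Fin k → ℚ))
    (d : (Fin k → ℚ) → (Fin k → ℚ) → ℚ)
    (hd0 : ∀ a b, d a b = 0 ↔ a = b)
    (hdsymm : ∀ a b, d a b = d b a)
    (hdtri : ∀ a b c, d a c ≤ d a b + d b c)
    (ΔG : ℕ → Fin nV → ℚ) (ΔH : ℕ → Fin nW → ℚ)
    (hΔG0 : ∀ s i, 0 ≤ ΔG s i) (hΔH0 : ∀ t j, 0 ≤ ΔH t j)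
    (hΔd : ∀ s, 1 ≤ s → s ≤ T → ∀ t, 1 ≤ t → t ≤ U → ∀ i j,
      d (f s i) (g t j) ≤ ΔG s i + ΔH t j) :
    ∃ x : ℚ,
      IsLeast {x : ℚ |
        ∃ (m : Fin (nV + 1) → Fin (nW + 1) → ℕ) (w : ℕ → ℕ → ℕ),
          (∀ i j, m i j = 0 ∨ m i j = 1) ∧
          (∀ s t, w s t = 0 ∨ w s t = 1) ∧
          (∀ i : Fin nV, ∑ j : Fin (nW + 1), m i.castSucc j = 1) ∧
          (∀ j : Fin nW, ∑ i : Fin (nV + 1), m i j.castSucc = 1) ∧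
          w 1 1 = 1 ∧
          (∀ s t, 1 ≤ s → s ≤ T - 1 → 1 ≤ t → t ≤ U - 1 →
            w s t ≤ w (s + 1) (t + 1) + w s (t + 1) + w (s + 1) t) ∧
          (∀ t, 1 ≤ t → t ≤ U - 1 → w T t ≤ w T (t + 1)) ∧
          (∀ s, 1 ≤ s → s ≤ T - 1 → w s U ≤ w (s + 1) U) ∧
          x = ∑ s ∈ Finset.Icc 1 T, ∑ t ∈ Finset.Icc 1 U,
              ∑ i : Fin (nV + 1), ∑ j : Fin (nW + 1),
                QPcoeff nV nW f g d ΔG ΔH s t i j * (w s t : ℚ) * (m i j : ℚ)} x ∧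
      IsLeast {x : ℚ |
        ∃ (M : Finset (Fin nV × Fin nW)) (p : Finset (ℕ × ℕ)),
          IsVertexMapping M ∧ IsWarpingPath T U p ∧
          x = ∑ q ∈ p, ((∑ a ∈ M, d (f q.1 a.1) (g q.2 a.2)) +
            (∑ v ∈ Finset.univ \ M.image Prod.fst, ΔG q.1 v) +
            (∑ w' ∈ Finset.univ \ M.image Prod.snd, ΔH q.2 w'))} x := by
  classical
  have hdpos : ∀ a b, 0 ≤ d a b := by
    intro a b
    have h1 : d a a = 0 := (hd0 a a).mpr rfl
    have h2 := hdtri a b a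
    have h3 := hdsymm b a
    linarith
  have hpbox : ∀ p : Finset (ℕ × ℕ), IsWarpingPath T U p →
      p ⊆ Finset.Icc 1 T ×ˢ Finset.Icc 1 U := by
    rintro p ⟨l, hl, rfl⟩ q hq
    rw [List.mem_toFinset] at hq
    have hb := warpingList_bounds hl q hq
    simp only [Finset.mem_product, Finset.mem_Icc]
    omega
  -- the dtgw set, phrased with `iCost`
  have hfin : {x : ℚ | ∃ M p, IsVertexMapping M ∧ IsWarpingPath T U p ∧
      x = ∑ q ∈ p, iCost f g d ΔG ΔH q.1 q.2 M}.Finite := by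
    have hsub : {x : ℚ | ∃ M p, IsVertexMapping M ∧ IsWarpingPath T U p ∧
        x = ∑ q ∈ p, iCost f g d ΔG ΔH q.1 q.2 M} ⊆
        (fun Mp : Finset (Fin nV × Fin nW) × Finset (ℕ × ℕ) =>
          ∑ q ∈ Mp.2, iCost f g d ΔG ΔH q.1 q.2 Mp.1) ''
        (Set.univ ×ˢ {p : Finset (ℕ × ℕ) | p ⊆ Finset.Icc 1 T ×ˢ Finset.Icc 1 U}) := by
      rintro x ⟨M, p, hM, hp, rfl⟩
      exact ⟨(M, p), ⟨Set.mem_univ _, hpbox p hp⟩, rfl⟩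
    refine Set.Finite.subset (Set.Finite.image _ (Set.Finite.prod Set.finite_univ ?_)) hsub
    exact Set.Finite.ofFinset (Finset.Icc 1 T ×ˢ Finset.Icc 1 U).powerset
      (by simp [Finset.mem_powerset])
  obtain ⟨l₀, hl₀, -⟩ := exists_warping_in_support hT hU (fun _ _ => 1)
    (fun _ _ => Or.inr rfl) rfl (fun _ _ _ _ _ _ => by simp) (fun _ _ _ => le_rfl)
    (fun _ _ _ => le_rfl)
  obtain ⟨M₀, hM₀, -⟩ := extend_mapping f g d ΔG ΔH T U hΔd ∅ (by simp) (by simp) (by simp)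
  have hne : {x : ℚ | ∃ M p, IsVertexMapping M ∧ IsWarpingPath T U p ∧
      x = ∑ q ∈ p, iCost f g d ΔG ΔH q.1 q.2 M}.Nonempty :=
    ⟨_, M₀, l₀.toFinset, hM₀, ⟨l₀, hl₀, rfl⟩, rfl⟩
  obtain ⟨x₀, hx₀mem, hx₀le⟩ := Set.exists_min_image _ id hfin hne
  simp only [id] at hx₀le
  refine ⟨x₀, ⟨?_, ?_⟩, hx₀mem, fun y hy => hx₀le y hy⟩
  · -- x₀ is attained by the QP
    obtain ⟨M, p, hM, hp, hx₀eq⟩ := hx₀mem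
    obtain ⟨l, hl, hlp⟩ := hp
    subst hlp
    have hppath : IsWarpingPath T U l.toFinset := ⟨l, hl, rfl⟩
    refine ⟨mOf M, (fun s t => if (s, t) ∈ l.toFinset then 1 else 0), mOf_binary M,
      ?_, mOf_row M hM.2.1, mOf_col M hM.2.2, ?_, ?_, ?_, ?_, ?_⟩
    · intro s t
      by_cases h : (s, t) ∈ l.toFinset <;> simp [h]
    · -- w 1 1 = 1
      have h11 : (1, 1) ∈ l.toFinset := by
        rw [List.mem_toFinset]
        cases l with
        | nil => exact absurd rfl hl.1
        | cons a tl =>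
            have ha : a = (1, 1) := by simpa using hl.2.1
            subst ha
            exact List.mem_cons_self
      exact if_pos h11
    · -- constraint (d)
      intro s t hs1 hsle ht1 htle
      by_cases hst : (s, t) ∈ l.toFinset
      · have hmem : (s, t) ∈ l := List.mem_toFinset.mp hst
        have hneq : (s, t) ≠ (T, U) := by
          intro h
          rw [Prod.mk.injEq] at h
          omega
        obtain ⟨q', hq'l, hstep⟩ := warpingList_next hl.2.2.2 hl.2.2.1 hmem hneq
        have hq'p : q' ∈ l.toFinset := List.mem_toFinset.mpr hq'l
        have hstep' : q' = (s + 1, t + 1) ∨ q' = (s, t + 1) ∨ q' = (s + 1, t) := hstep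
        rcases hstep' with rfl | rfl | rfl <;>
          simp only [if_pos hst, if_pos hq'p] <;> omega
      · simp [hst]
    · -- constraint (e)
      intro t ht1 htle
      by_cases hst : (T, t) ∈ l.toFinset
      · have hmem : (T, t) ∈ l := List.mem_toFinset.mp hst
        have hneq : (T, t) ≠ (T, U) := by
          intro h
          rw [Prod.mk.injEq] at h
          omega
        obtain ⟨q', hq'l, hstep⟩ := warpingList_next hl.2.2.2 hl.2.2.1 hmem hneq
        have hq'p : q' ∈ l.toFinset := List.mem_toFinset.mpr hq'l
        have hbnd := warpingList_bounds hl q' hq'l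
        have hstep' : q' = (T + 1, t + 1) ∨ q' = (T, t + 1) ∨ q' = (T + 1, t) := hstep
        rcases hstep' with rfl | rfl | rfl
        · have hcontra : T + 1 ≤ T := hbnd.2.1
          omega
        · simp only [if_pos hst, if_pos hq'p]
          exact le_rfl
        · have hcontra : T + 1 ≤ T := hbnd.2.1
          omega
      · simp [hst]
    · -- constraint (f)
      intro s hs1 hsle
      by_cases hst : (s, U) ∈ l.toFinset
      · have hmem : (s, U) ∈ l := List.mem_toFinset.mp hst
        have hneq : (s, U) ≠ (T, U) := by
          intro h
          rw [Prod.mk.injEq] at h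
          omega
        obtain ⟨q', hq'l, hstep⟩ := warpingList_next hl.2.2.2 hl.2.2.1 hmem hneq
        have hq'p : q' ∈ l.toFinset := List.mem_toFinset.mpr hq'l
        have hbnd := warpingList_bounds hl q' hq'l
        have hstep' : q' = (s + 1, U + 1) ∨ q' = (s, U + 1) ∨ q' = (s + 1, U) := hstep
        rcases hstep' with rfl | rfl | rfl
        · have hcontra : U + 1 ≤ U := hbnd.2.2.2
          omega
        · have hcontra : U + 1 ≤ U := hbnd.2.2.2
          omega
        · simp only [if_pos hst, if_pos hq'p]
          exact le_rfl
      · simp [hst]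
    · -- value equality
      have hinner : ∀ s t, (∑ i : Fin (nV + 1), ∑ j : Fin (nW + 1),
          QPcoeff nV nW f g d ΔG ΔH s t i j *
            (((if (s, t) ∈ l.toFinset then 1 else 0 : ℕ)) : ℚ) * (mOf M i j : ℚ))
          = (if (s, t) ∈ l.toFinset then (1:ℚ) else 0) *
              iCost f g d ΔG ΔH s t M := by
        intro s t
        by_cases hc : (s, t) ∈ l.toFinset
        · simp only [if_pos hc, Nat.cast_one, mul_one, one_mul]
          exact (qp_inner_eq f g d ΔG ΔH (mOf M) (mOf_binary M) (mOf_row M hM.2.1)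
            (mOf_col M hM.2.2) s t).trans (by rw [qpM_mOf])
        · simp only [if_neg hc, Nat.cast_zero, mul_zero, zero_mul, Finset.sum_const_zero]
      have hsum : (∑ s ∈ Finset.Icc 1 T, ∑ t ∈ Finset.Icc 1 U,
          ∑ i : Fin (nV + 1), ∑ j : Fin (nW + 1),
            QPcoeff nV nW f g d ΔG ΔH s t i j *
              (((if (s, t) ∈ l.toFinset then 1 else 0 : ℕ)) : ℚ) * (mOf M i j : ℚ))
          = ∑ q ∈ l.toFinset, iCost f g d ΔG ΔH q.1 q.2 M := by
        rw [Finset.sum_congr rfl fun s _ => Finset.sum_congr rfl fun t _ => hinner s t]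
        exact sum_indicator_box _ _ (hpbox _ hppath)
      rw [hsum]
      exact hx₀eq
  · -- x₀ is a lower bound for the QP
    intro x hx
    obtain ⟨m, w, hmb, hwb, hrow, hcol, hw11, hcd, hce, hcf, hxeq⟩ := hx
    have hinner : ∀ s t, (∑ i : Fin (nV + 1), ∑ j : Fin (nW + 1),
        QPcoeff nV nW f g d ΔG ΔH s t i j * (w s t : ℚ) * (m i j : ℚ))
        = (w s t : ℚ) * iCost f g d ΔG ΔH s t (qpM m) := by
      intro s t
      rw [← qp_inner_eq f g d ΔG ΔH m hmb hrow hcol s t, Finset.mul_sum]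
      refine Finset.sum_congr rfl fun i _ => ?_
      rw [Finset.mul_sum]
      exact Finset.sum_congr rfl fun j _ => by ring
    have hxeq' : x = ∑ s ∈ Finset.Icc 1 T, ∑ t ∈ Finset.Icc 1 U,
        (w s t : ℚ) * iCost f g d ΔG ΔH s t (qpM m) := by
      rw [hxeq]
      exact Finset.sum_congr rfl fun s _ => Finset.sum_congr rfl fun t _ => hinner s t
    obtain ⟨l, hl, hw1⟩ := exists_warping_in_support hT hU w hwb hw11 hcd hce hcf
    have hppath : IsWarpingPath T U l.toFinset := ⟨l, hl, rfl⟩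
    have hpsub : l.toFinset ⊆ Finset.Icc 1 T ×ˢ Finset.Icc 1 U := hpbox _ hppath
    obtain ⟨M, hM, hMle⟩ := extend_mapping f g d ΔG ΔH T U hΔd (qpM m)
      (qpM_inj_fst m hrow) (qpM_inj_snd m hcol) (qpM_card_le m hrow hcol)
    have hyS2 : (∑ q ∈ l.toFinset, iCost f g d ΔG ΔH q.1 q.2 M) ∈
        {x : ℚ | ∃ M p, IsVertexMapping M ∧ IsWarpingPath T U p ∧
          x = ∑ q ∈ p, iCost f g d ΔG ΔH q.1 q.2 M} :=
      ⟨M, l.toFinset, hM, hppath, rfl⟩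
    have hy1 : (∑ q ∈ l.toFinset, iCost f g d ΔG ΔH q.1 q.2 M)
        ≤ ∑ q ∈ l.toFinset, iCost f g d ΔG ΔH q.1 q.2 (qpM m) := by
      apply Finset.sum_le_sum
      intro q hq
      have hb := warpingList_bounds hl q (List.mem_toFinset.mp hq)
      exact hMle q.1 q.2 hb.1 hb.2.1 hb.2.2.1 hb.2.2.2
    have hy2 : (∑ q ∈ l.toFinset, iCost f g d ΔG ΔH q.1 q.2 (qpM m))
        ≤ ∑ s ∈ Finset.Icc 1 T, ∑ t ∈ Finset.Icc 1 U,
            (w s t : ℚ) * iCost f g d ΔG ΔH s t (qpM m) :=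
      sum_box_ge T U _ (fun s t => iCost_nonneg f g d ΔG ΔH hdpos hΔG0 hΔH0 s t _)
        w hwb l.toFinset hpsub (fun q hq => hw1 q (List.mem_toFinset.mp hq))
    calc x₀ ≤ ∑ q ∈ l.toFinset, iCost f g d ΔG ΔH q.1 q.2 M := hx₀le _ hyS2
      _ ≤ ∑ q ∈ l.toFinset, iCost f g d ΔG ΔH q.1 q.2 (qpM m) := hy1
      _ ≤ _ := hy2
      _ = x := hxeq'.symm
end
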